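/- arXiv:1906.09464 — 6 statements merged into one kernel-verified Lean document; each statement's English description precedes it below -/
import Mathlib

section
/- Let φ : X → ℝ be measurable with |||φ|||_β < ∞. Then the minimum over c ∈ ℝ of ‖φ + c‖_β is attained and equals |||φ|||_β; that is, there exists c₀ ∈ ℝ with ‖φ + c₀‖_β = |||φ|||_β, and |||φ|||_β ≤ ‖φ + c‖_β for every c ∈ ℝ. -/
open MeasureTheory ProbabilityTheory ENNReal

noncomputable section

namespace PoissonPaper

variable {X : Type*} [MeasurableSpace X]

/-- The weighted sup-norm `‖φ‖_β = sup_x |φ(x)| / (1 + β V(x))`, valued in `ℝ≥0∞`. -/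
def wnorm (β : ℝ) (V : X → ℝ) (φ : X → ℝ) : ℝ≥0∞ :=
  ⨆ x, ENNReal.ofReal (|φ x| / (1 + β * V x))

open Classical in
/-- The metric `d_β(x,y) = 2 + βV(x) + βV(y)` for `x ≠ y`, `0` on the diagonal. -/
def dBeta (β : ℝ) (V : X → ℝ) (x y : X) : ℝ :=
  if x = y then 0 else 2 + β * V x + β * V y

/-- The oscillation seminorm `|||φ|||_β = sup_{x ≠ y} |φ(x) - φ(y)| / d_β(x,y)`,
valued in `ℝ≥0∞`.  (For `x = y` the quotient is `0/0 = 0`, so the diagonal does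
not contribute.) -/
def osc (β : ℝ) (V : X → ℝ) (φ : X → ℝ) : ℝ≥0∞ :=
  ⨆ x, ⨆ y, ENNReal.ofReal (|φ x - φ y| / dBeta β V x y)

/-- Action of a kernel on functions: `(P*φ)(x) = ∫ φ(y) P(x,dy)`. -/
def act (P : Kernel X X) (φ : X → ℝ) : X → ℝ := fun x => ∫ y, φ y ∂(P x)

/-- Drift inequality `(P*V)(x) ≤ γ V(x) + K`, with the integral taken in the
lower-integral sense (recall `V ≥ 0`). -/
def Drift (P : Kernel X X) (V : X → ℝ) (γ K : ℝ) : Prop :=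
  ∀ x, ∫⁻ y, ENNReal.ofReal (V y) ∂(P x) ≤ ENNReal.ofReal (γ * V x + K)

instance bindIsFinite (μ : Measure X) [IsFiniteMeasure μ] (P : Kernel X X) [IsMarkovKernel P] :
    IsFiniteMeasure (μ.bind P) := by
  constructor
  rw [Measure.bind_apply MeasurableSet.univ (Kernel.measurable P).aemeasurable]
  calc ∫⁻ x, (P x) Set.univ ∂μ = ∫⁻ _, 1 ∂μ := by simp
    _ = μ Set.univ := by simp
    _ < ⊤ := measure_lt_top μ _

/-- The total variation measure `|μ₁ - μ₂|` of the difference of two finite measures. -/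
def tv (μ₁ μ₂ : Measure X) [IsFiniteMeasure μ₁] [IsFiniteMeasure μ₂] : Measure X :=
  (μ₁.toSignedMeasure - μ₂.toSignedMeasure).totalVariation

/-- `σ_β(μ₁, μ₂) = ∫ (1 + βV) d|μ₁ - μ₂|`. -/
def sigmaB (β : ℝ) (V : X → ℝ) (μ₁ μ₂ : Measure X) [IsFiniteMeasure μ₁] [IsFiniteMeasure μ₂] :
    ℝ :=
  ∫ x, (1 + β * V x) ∂(tv μ₁ μ₂)

/-- `σ_β(η) = ∫ (1 + βV) d|η|` for a finite signed measure `η`. -/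
def sigmaS (β : ℝ) (V : X → ℝ) (η : SignedMeasure X) : ℝ :=
  ∫ x, (1 + β * V x) ∂(η.totalVariation)

/-- `n`-fold iterate (power) of a kernel. -/
def kpow (P : Kernel X X) : ℕ → Kernel X X
  | 0 => Kernel.id
  | n + 1 => P ∘ₖ kpow P n

instance kpowIsMarkov (P : Kernel X X) [IsMarkovKernel P] : ∀ n, IsMarkovKernel (kpow P n)
  | 0 => by rw [kpow]; infer_instance
  | n + 1 => by have := kpowIsMarkov P n; rw [kpow]; infer_instance

/-- Action of a (Markov) kernel on finite signed measures, via the Jordan decomposition. -/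
def sbind (P : Kernel X X) [IsMarkovKernel P] (η : SignedMeasure X) : SignedMeasure X :=
  (η.toJordanDecomposition.posPart.bind P).toSignedMeasure -
    (η.toJordanDecomposition.negPart.bind P).toSignedMeasure


/-- The minimum over `c ∈ ℝ` of `‖φ + c‖_β` is attained and equals
`|||φ|||_β`. -/
theorem oscillation_eq_min_shifted_norm
    {X : Type*} [MeasurableSpace X] (V : X → ℝ) (hVmeas : Measurable V)
    (hV0 : ∀ x, 0 ≤ V x) (β : ℝ) (hβ : 0 < β)
    (φ : X → ℝ) (hφ : Measurable φ) (hfin : osc β V φ < ⊤) :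
    (∃ c₀ : ℝ, wnorm β V (fun x => φ x + c₀) = osc β V φ) ∧
      ∀ c : ℝ, osc β V φ ≤ wnorm β V (fun x => φ x + c) := by
  have hden : ∀ x : X, 0 < 1 + β * V x := fun x => by
    have := mul_nonneg hβ.le (hV0 x); linarith
  -- Part 2: lower bound for every c
  have part2 : ∀ c : ℝ, osc β V φ ≤ wnorm β V (fun x => φ x + c) := by
    intro c
    set N := wnorm β V (fun x => φ x + c) with hN
    rcases eq_or_ne N ⊤ with hT | hT
    · rw [hT]; exact le_top
    have hbound : ∀ x : X, |φ x + c| ≤ N.toReal * (1 + β * V x) := by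
      intro x
      have h1 : ENNReal.ofReal (|φ x + c| / (1 + β * V x)) ≤ N :=
        le_iSup (fun x => ENNReal.ofReal (|φ x + c| / (1 + β * V x))) x
      have h2 : |φ x + c| / (1 + β * V x) ≤ N.toReal :=
        (ENNReal.ofReal_le_iff_le_toReal hT).mp h1
      exact (div_le_iff₀ (hden x)).mp h2
    apply iSup_le; intro x; apply iSup_le; intro y
    by_cases hxy : x = y
    · simp [hxy, dBeta]
    · have hd : dBeta β V x y = 2 + β * V x + β * V y := by simp [dBeta, hxy]
      have hdpos : 0 < dBeta β V x y := by
        rw [hd]; have := mul_nonneg hβ.le (hV0 x); have := mul_nonneg hβ.le (hV0 y); linarith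
      have hkey : |φ x - φ y| ≤ N.toReal * dBeta β V x y := by
        calc |φ x - φ y| = |(φ x + c) - (φ y + c)| := by ring_nf
          _ ≤ |φ x + c| + |φ y + c| := abs_sub _ _
          _ ≤ N.toReal * (1 + β * V x) + N.toReal * (1 + β * V y) :=
              add_le_add (hbound x) (hbound y)
          _ = N.toReal * dBeta β V x y := by rw [hd]; ring
      have : |φ x - φ y| / dBeta β V x y ≤ N.toReal := (div_le_iff₀ hdpos).mpr hkey
      calc ENNReal.ofReal (|φ x - φ y| / dBeta β V x y) ≤ ENNReal.ofReal N.toReal :=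
            ENNReal.ofReal_le_ofReal this
        _ = N := ENNReal.ofReal_toReal hT
  refine ⟨?_, part2⟩
  -- Part 1: attainment
  cases isEmpty_or_nonempty X with
  | inl h => exact ⟨0, by simp [wnorm, osc]⟩
  | inr h =>
    set m := (osc β V φ).toReal with hm
    have hm0 : 0 ≤ m := ENNReal.toReal_nonneg
    have hosc : ∀ x y : X, |φ x - φ y| ≤ m * (2 + β * V x + β * V y) := by
      intro x y
      by_cases hxy : x = y
      · subst hxy; simp
        have := mul_nonneg hβ.le (hV0 x)
        nlinarith
      · have hd : dBeta β V x y = 2 + β * V x + β * V y := by simp [dBeta, hxy]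
        have hdpos : 0 < dBeta β V x y := by
          rw [hd]; have := mul_nonneg hβ.le (hV0 x); have := mul_nonneg hβ.le (hV0 y); linarith
        have h1 : ENNReal.ofReal (|φ x - φ y| / dBeta β V x y) ≤ osc β V φ :=
          le_trans (le_iSup (fun y => ENNReal.ofReal (|φ x - φ y| / dBeta β V x y)) y)
            (le_iSup (fun x => ⨆ y, ENNReal.ofReal (|φ x - φ y| / dBeta β V x y)) x)
        have h2 : |φ x - φ y| / dBeta β V x y ≤ m :=
          (ENNReal.ofReal_le_iff_le_toReal hfin.ne).mp h1
        have := (div_le_iff₀ hdpos).mp h2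
        rw [hd] at this; linarith
    -- candidate: sup of lower ends of the intervals
    set A : Set ℝ := Set.range (fun x => -φ x - m * (1 + β * V x)) with hA
    have hAne : A.Nonempty := Set.range_nonempty _
    have hub : ∀ y : X, ∀ a ∈ A, a ≤ m * (1 + β * V y) - φ y := by
      rintro y a ⟨x, rfl⟩
      have h : φ y - φ x ≤ |φ x - φ y| := by
        rw [abs_sub_comm]; exact le_abs_self _
      simp only []
      linarith [hosc x y]
    have hbdd : BddAbove A := ⟨m * (1 + β * V (Classical.arbitrary X)) - φ (Classical.arbitrary X),
      fun a ha => hub _ a ha⟩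
    set c₀ := sSup A with hc0
    have hlow : ∀ x : X, -φ x - m * (1 + β * V x) ≤ c₀ :=
      fun x => le_csSup hbdd ⟨x, rfl⟩
    have hhigh : ∀ x : X, c₀ ≤ m * (1 + β * V x) - φ x :=
      fun x => csSup_le hAne (hub x)
    refine ⟨c₀, le_antisymm ?_ (part2 c₀)⟩
    apply iSup_le; intro x
    have habs : |φ x + c₀| ≤ m * (1 + β * V x) := by
      rw [abs_le]; constructor
      · have := hlow x; linarith
      · have := hhigh x; linarith
    have : |φ x + c₀| / (1 + β * V x) ≤ m := (div_le_iff₀ (hden x)).mpr habs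
    calc ENNReal.ofReal (|φ x + c₀| / (1 + β * V x)) ≤ ENNReal.ofReal m :=
          ENNReal.ofReal_le_ofReal this
      _ = osc β V φ := ENNReal.ofReal_toReal hfin.ne

end PoissonPaper
end
end

section
/- For any two probability measures μ₁, μ₂ on X with ∫ V dμ₁ < ∞ and ∫ V dμ₂ < ∞, the three quantities ∫ (1 + βV) d|μ₁ − μ₂|, sup{∫ φ d(μ₁ − μ₂) : ‖φ‖_β ≤ 1}, and sup{∫ φ d(μ₁ − μ₂) : |||φ|||_β ≤ 1} are all equal, where |μ₁ − μ₂| denotes the total variation measure of the signed measure μ₁ − μ₂. -/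
open MeasureTheory ProbabilityTheory ENNReal

noncomputable section

namespace PoissonPaper

variable {X : Type*} [MeasurableSpace X]

theorem aux_wnorm
    {X : Type*} [MeasurableSpace X] (V : X → ℝ) (hVmeas : Measurable V)
    (hV0 : ∀ x, 0 ≤ V x) (β : ℝ) (hβ : 0 < β)
    (μ₁ μ₂ : Measure X) [IsProbabilityMeasure μ₁] [IsProbabilityMeasure μ₂]
    (h₁ : Integrable V μ₁) (h₂ : Integrable V μ₂) :
    sSup {r : ℝ | ∃ φ : X → ℝ, Measurable φ ∧
        (⨆ x, ENNReal.ofReal (|φ x| / (1 + β * V x))) ≤ 1 ∧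
        r = ∫ x, φ x ∂μ₁ - ∫ x, φ x ∂μ₂}
      = ∫ x, (1 + β * V x)
          ∂((μ₁.toSignedMeasure - μ₂.toSignedMeasure).totalVariation) := by
  classical
  have hXne : Nonempty X := by
    by_contra h
    have : (μ₁ : Measure X) Set.univ = 1 := measure_univ
    rw [Set.univ_eq_empty_iff.mpr (not_nonempty_iff.mp h)] at this
    simp at this
  set g : X → ℝ := fun x => 1 + β * V x with hg
  have hgpos : ∀ x, 0 < g x := fun x => by
    have := mul_nonneg hβ.le (hV0 x); simp [hg]; linarith
  have hgmeas : Measurable g := by measurability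
  set η := μ₁.toSignedMeasure - μ₂.toSignedMeasure with hη
  set νp := η.toJordanDecomposition.posPart with hνp
  set νn := η.toJordanDecomposition.negPart with hνn
  have htv : η.totalVariation = νp + νn := rfl
  -- measure identity
  have hmeq : μ₁ + νn = μ₂ + νp := by
    have hsig : νp.toSignedMeasure - νn.toSignedMeasure = η :=
      η.toSignedMeasure_toJordanDecomposition
    ext A hA
    have h1 : (νp A).toReal - (νn A).toReal = (μ₁ A).toReal - (μ₂ A).toReal := by
      have := congrArg (fun s : SignedMeasure X => s A) hsig
      simpa [hη, hA, VectorMeasure.sub_apply, Measure.toSignedMeasure_apply_measurable hA, measureReal_def]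
        using this
    have h2 : (μ₁ A).toReal + (νn A).toReal = (μ₂ A).toReal + (νp A).toReal := by linarith
    have h3 := ENNReal.toReal_eq_toReal_iff' (x := μ₁ A + νn A) (y := μ₂ A + νp A)
      (by finiteness) (by finiteness)
    simp only [Measure.add_apply]
    rw [← h3, ENNReal.toReal_add (by finiteness) (by finiteness),
      ENNReal.toReal_add (by finiteness) (by finiteness)]
    exact h2
  obtain ⟨T, hT, hTp, hTn⟩ := η.toJordanDecomposition.mutuallySingular
  -- νp ≤ μ₁ and νn ≤ μ₂
  have hple : νp ≤ μ₁ := by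
    rw [Measure.le_iff]
    intro A hA
    have e1 : νp A = νp (A ∩ Tᶜ) := by
      have : νp (A ∩ T) = 0 := measure_mono_null Set.inter_subset_right hTp
      rw [← measure_inter_add_diff A hT, this, zero_add, Set.diff_eq]
    have e2 : νn (A ∩ Tᶜ) = 0 := measure_mono_null Set.inter_subset_right hTn
    have := congrArg (fun m : Measure X => m (A ∩ Tᶜ)) hmeq
    simp only [Measure.add_apply, e2, add_zero] at this
    calc νp A = νp (A ∩ Tᶜ) := e1
      _ ≤ μ₂ (A ∩ Tᶜ) + νp (A ∩ Tᶜ) := le_add_self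
      _ = μ₁ (A ∩ Tᶜ) := this.symm
      _ ≤ μ₁ A := measure_mono Set.inter_subset_left
  have hnle : νn ≤ μ₂ := by
    rw [Measure.le_iff]
    intro A hA
    have e1 : νn A = νn (A ∩ T) := by
      have : νn (A \ T) = 0 := measure_mono_null (Set.diff_subset_compl A T) hTn
      rw [← measure_inter_add_diff A hT, this, add_zero]
    have e2 : νp (A ∩ T) = 0 := measure_mono_null Set.inter_subset_right hTp
    have := congrArg (fun m : Measure X => m (A ∩ T)) hmeq
    simp only [Measure.add_apply, e2, add_zero] at this
    calc νn A = νn (A ∩ T) := e1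
      _ ≤ μ₁ (A ∩ T) + νn (A ∩ T) := le_add_self
      _ = μ₂ (A ∩ T) := this
      _ ≤ μ₂ A := measure_mono Set.inter_subset_left
  -- integrability of g
  have hg1 : Integrable g μ₁ := (integrable_const 1).add (h₁.const_mul β)
  have hg2 : Integrable g μ₂ := (integrable_const 1).add (h₂.const_mul β)
  have hgp : Integrable g νp := hg1.mono_measure hple
  have hgn : Integrable g νn := hg2.mono_measure hnle
  set I : ℝ := ∫ x, g x ∂(η.totalVariation) with hI
  have hIsplit : I = ∫ x, g x ∂νp + ∫ x, g x ∂νn := by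
    rw [hI, htv, integral_add_measure hgp hgn]
  -- key: integrable functions bounded by g have the difference-of-integrals identity
  have hkey : ∀ ψ : X → ℝ, Measurable ψ → (∀ x, |ψ x| ≤ g x) →
      ∫ x, ψ x ∂μ₁ - ∫ x, ψ x ∂μ₂ = ∫ x, ψ x ∂νp - ∫ x, ψ x ∂νn := by
    intro ψ hm hb
    have hae := fun (μ : Measure X) => (hm.aestronglyMeasurable (μ := μ))
    have hi1 : Integrable ψ μ₁ := hg1.mono' (hae μ₁) (ae_of_all _ hb)
    have hi2 : Integrable ψ μ₂ := hg2.mono' (hae μ₂) (ae_of_all _ hb)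
    have hip : Integrable ψ νp := hgp.mono' (hae νp) (ae_of_all _ hb)
    have hin : Integrable ψ νn := hgn.mono' (hae νn) (ae_of_all _ hb)
    have := congrArg (fun m : Measure X => ∫ x, ψ x ∂m) hmeq
    rw [integral_add_measure hi1 hin, integral_add_measure hi2 hip] at this
    linarith
  -- upper bound
  have hub : ∀ r ∈ {r : ℝ | ∃ φ : X → ℝ, Measurable φ ∧
        (⨆ x, ENNReal.ofReal (|φ x| / (1 + β * V x))) ≤ 1 ∧
        r = ∫ x, φ x ∂μ₁ - ∫ x, φ x ∂μ₂}, r ≤ I := by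
    rintro r ⟨φ, hm, hw, rfl⟩
    have hb : ∀ x, |φ x| ≤ g x := by
      intro x
      have h1 : ENNReal.ofReal (|φ x| / (1 + β * V x)) ≤ 1 := le_trans (le_iSup (fun x => ENNReal.ofReal (|φ x| / (1 + β * V x))) x) hw
      rw [ENNReal.ofReal_le_one] at h1
      have := (div_le_one (hgpos x)).mp h1
      exact this
    have hae := fun (μ : Measure X) => (hm.aestronglyMeasurable (μ := μ))
    have hip : Integrable φ νp := hgp.mono' (hae νp) (ae_of_all _ hb)
    have hin : Integrable φ νn := hgn.mono' (hae νn) (ae_of_all _ hb)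
    rw [hkey φ hm hb, hIsplit]
    have l1 : ∫ x, φ x ∂νp ≤ ∫ x, g x ∂νp :=
      integral_mono hip hgp fun x => (abs_le.mp (hb x)).2
    have l2 : -∫ x, φ x ∂νn ≤ ∫ x, g x ∂νn := by
      rw [← integral_neg]
      exact integral_mono hin.neg hgn fun x => le_trans (neg_le_abs _) (hb x)
    linarith
  -- the achiever
  set φ₀ : X → ℝ := fun x => if x ∈ T then -(g x) else g x with hφ₀
  have hφ₀m : Measurable φ₀ := Measurable.ite hT hgmeas.neg hgmeas
  have hφ₀abs : ∀ x, |φ₀ x| = g x := by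
    intro x; by_cases hx : x ∈ T <;> simp [hφ₀, hx, abs_of_pos (hgpos x)]
  have hφ₀w : (⨆ x, ENNReal.ofReal (|φ₀ x| / (1 + β * V x))) ≤ 1 := by
    apply iSup_le; intro x
    rw [hφ₀abs x]
    rw [show (1 + β * V x) = g x from rfl, div_self (hgpos x).ne']
    simp
  have hmem : I ∈ {r : ℝ | ∃ φ : X → ℝ, Measurable φ ∧
        (⨆ x, ENNReal.ofReal (|φ x| / (1 + β * V x))) ≤ 1 ∧
        r = ∫ x, φ x ∂μ₁ - ∫ x, φ x ∂μ₂} := by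
    refine ⟨φ₀, hφ₀m, hφ₀w, ?_⟩
    have hb : ∀ x, |φ₀ x| ≤ g x := fun x => (hφ₀abs x).le
    rw [hkey φ₀ hφ₀m hb]
    have ep : ∫ x, φ₀ x ∂νp = ∫ x, g x ∂νp := by
      apply integral_congr_ae
      have : ∀ᵐ x ∂νp, x ∉ T := by
        rw [ae_iff]; exact measure_mono_null (fun x hx => not_not.mp hx) hTp
      filter_upwards [this] with x hx
      simp [hφ₀, hx]
    have en : ∫ x, φ₀ x ∂νn = -∫ x, g x ∂νn := by
      rw [← integral_neg]
      apply integral_congr_ae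
      have : ∀ᵐ x ∂νn, x ∈ T := by
        rw [ae_iff]; exact measure_mono_null (fun x hx => hx) hTn
      filter_upwards [this] with x hx
      simp [hφ₀, hx]
    rw [ep, en, hIsplit]; ring
  exact le_antisymm (csSup_le ⟨I, hmem⟩ hub) (le_csSup ⟨I, hub⟩ hmem)


theorem setEq
    {X : Type*} [MeasurableSpace X] (V : X → ℝ) (hVmeas : Measurable V)
    (hV0 : ∀ x, 0 ≤ V x) (β : ℝ) (hβ : 0 < β) [Nonempty X]
    (μ₁ μ₂ : Measure X) [IsProbabilityMeasure μ₁] [IsProbabilityMeasure μ₂]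
    (h₁ : Integrable V μ₁) (h₂ : Integrable V μ₂) :
    {r : ℝ | ∃ φ : X → ℝ, Measurable φ ∧ osc β V φ ≤ 1 ∧
        r = ∫ x, φ x ∂μ₁ - ∫ x, φ x ∂μ₂}
    = {r : ℝ | ∃ φ : X → ℝ, Measurable φ ∧ wnorm β V φ ≤ 1 ∧
        r = ∫ x, φ x ∂μ₁ - ∫ x, φ x ∂μ₂} := by
  classical
  set g : X → ℝ := fun x => 1 + β * V x with hg
  have hgpos : ∀ x, 0 < g x := fun x => by
    have := mul_nonneg hβ.le (hV0 x); simp only [hg]; linarith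
  have hwiff : ∀ φ : X → ℝ, wnorm β V φ ≤ 1 ↔ ∀ x, |φ x| ≤ g x := by
    intro φ
    constructor
    · intro hw x
      have h1 : ENNReal.ofReal (|φ x| / (1 + β * V x)) ≤ 1 :=
        le_trans (le_iSup (fun x => ENNReal.ofReal (|φ x| / (1 + β * V x))) x) hw
      rw [ENNReal.ofReal_le_one] at h1
      exact (div_le_one (hgpos x)).mp h1
    · intro hb
      apply iSup_le; intro x
      rw [ENNReal.ofReal_le_one]
      exact (div_le_one (hgpos x)).mpr (hb x)
  have hoiff : ∀ φ : X → ℝ, osc β V φ ≤ 1 ↔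
      ∀ x y, x ≠ y → |φ x - φ y| ≤ 2 + β * V x + β * V y := by
    intro φ
    constructor
    · intro ho x y hxy
      have h1 : ENNReal.ofReal (|φ x - φ y| / dBeta β V x y) ≤ 1 := by
        refine le_trans ?_ ho
        exact le_trans (le_iSup (fun y => ENNReal.ofReal (|φ x - φ y| / dBeta β V x y)) y)
          (le_iSup (fun x => ⨆ y, ENNReal.ofReal (|φ x - φ y| / dBeta β V x y)) x)
      rw [ENNReal.ofReal_le_one] at h1
      have hd : dBeta β V x y = 2 + β * V x + β * V y := if_neg hxy
      have hdpos : 0 < dBeta β V x y := by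
        rw [hd]
        have := mul_nonneg hβ.le (hV0 x); have := mul_nonneg hβ.le (hV0 y); linarith
      rw [← hd]
      exact (div_le_one hdpos).mp h1
    · intro hb
      apply iSup_le; intro x; apply iSup_le; intro y
      rw [ENNReal.ofReal_le_one]
      by_cases hxy : x = y
      · subst hxy; simp [dBeta]
      · have hd : dBeta β V x y = 2 + β * V x + β * V y := if_neg hxy
        have hdpos : 0 < dBeta β V x y := by
          rw [hd]
          have := mul_nonneg hβ.le (hV0 x); have := mul_nonneg hβ.le (hV0 y); linarith
        exact (div_le_one hdpos).mpr (by rw [hd]; exact hb x y hxy)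
  have hg1 : Integrable g μ₁ := (integrable_const 1).add (h₁.const_mul β)
  have hg2 : Integrable g μ₂ := (integrable_const 1).add (h₂.const_mul β)
  ext r
  simp only [Set.mem_setOf_eq]
  constructor
  · rintro ⟨φ, hm, ho, rfl⟩
    rw [hoiff] at ho
    have ho' : ∀ x y, |φ x - φ y| ≤ 2 + β * V x + β * V y := by
      intro x y
      by_cases hxy : x = y
      · subst hxy
        have := mul_nonneg hβ.le (hV0 x); simp; linarith
      · exact ho x y hxy
    set c : ℝ := sSup (Set.range fun x => φ x - 1 - β * V x) with hc
    have x0 : X := Classical.arbitrary X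
    have hbdd : BddAbove (Set.range fun x => φ x - 1 - β * V x) := by
      refine ⟨φ x0 + 1 + β * V x0, ?_⟩
      rintro _ ⟨x, rfl⟩
      show φ x - 1 - β * V x ≤ φ x0 + 1 + β * V x0
      have := (abs_le.mp (ho' x x0)).1
      have h2 := (abs_le.mp (ho' x x0)).2
      linarith
    have hc1 : ∀ y, φ y - c ≤ 1 + β * V y := by
      intro y
      have : φ y - 1 - β * V y ≤ c := le_csSup hbdd ⟨y, rfl⟩
      linarith
    have hc2 : ∀ y, c - φ y ≤ 1 + β * V y := by
      intro y
      have : c ≤ φ y + 1 + β * V y := by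
        apply csSup_le (Set.range_nonempty _)
        rintro _ ⟨x, rfl⟩
        show φ x - 1 - β * V x ≤ φ y + 1 + β * V y
        have := (abs_le.mp (ho' x y)).2
        linarith
      linarith
    have hψb : ∀ x, |φ x - c| ≤ g x := fun x =>
      abs_le.mpr ⟨by have := hc2 x; simp only [hg]; linarith,
        by have := hc1 x; simpa [hg] using this⟩
    have hφint : ∀ (μ : Measure X), IsFiniteMeasure μ → Integrable g μ → Integrable φ μ := by
      intro μ hfm hgi
      haveI := hfm
      refine (hgi.add (integrable_const |c|)).mono' hm.aestronglyMeasurable (ae_of_all _ ?_)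
      intro x
      have h := hψb x
      have habs : |φ x| ≤ g x + |c| := by
        calc |φ x| = |(φ x - c) + c| := by ring_nf
          _ ≤ |φ x - c| + |c| := abs_add_le _ _
          _ ≤ g x + |c| := by linarith
      simpa using habs
    refine ⟨fun x => φ x - c, hm.sub measurable_const, (hwiff _).mpr hψb, ?_⟩
    have e : ∀ (μ : Measure X), IsProbabilityMeasure μ → Integrable g μ →
        ∫ x, (φ x - c) ∂μ = ∫ x, φ x ∂μ - c := by
      intro μ hp hgi
      haveI := hp
      rw [integral_sub (hφint μ inferInstance hgi) (integrable_const c)]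
      simp [measure_univ]
    rw [e μ₁ ‹_› hg1, e μ₂ ‹_› hg2]
    ring
  · rintro ⟨φ, hm, hw, rfl⟩
    refine ⟨φ, hm, ?_, rfl⟩
    rw [hwiff] at hw
    rw [hoiff]
    intro x y hxy
    calc |φ x - φ y| ≤ |φ x| + |φ y| := abs_sub (φ x) (φ y)
      _ ≤ g x + g y := add_le_add (hw x) (hw y)
      _ = 2 + β * V x + β * V y := by simp only [hg]; ring

/-- The weighted total variation distance coincides with the two dual
sup formulations. -/
theorem weighted_tv_three_expressions
    {X : Type*} [MeasurableSpace X] (V : X → ℝ) (hVmeas : Measurable V)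
    (hV0 : ∀ x, 0 ≤ V x) (β : ℝ) (hβ : 0 < β)
    (μ₁ μ₂ : Measure X) [IsProbabilityMeasure μ₁] [IsProbabilityMeasure μ₂]
    (h₁ : Integrable V μ₁) (h₂ : Integrable V μ₂) :
    sSup {r : ℝ | ∃ φ : X → ℝ, Measurable φ ∧ wnorm β V φ ≤ 1 ∧
        r = ∫ x, φ x ∂μ₁ - ∫ x, φ x ∂μ₂} = ∫ x, (1 + β * V x) ∂(tv μ₁ μ₂) ∧
      sSup {r : ℝ | ∃ φ : X → ℝ, Measurable φ ∧ osc β V φ ≤ 1 ∧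
        r = ∫ x, φ x ∂μ₁ - ∫ x, φ x ∂μ₂} = ∫ x, (1 + β * V x) ∂(tv μ₁ μ₂) := by
  have hXne : Nonempty X := by
    by_contra h
    have huniv : (μ₁ : Measure X) Set.univ = 1 := measure_univ
    rw [Set.univ_eq_empty_iff.mpr (not_nonempty_iff.mp h)] at huniv
    simp at huniv
  constructor
  · exact aux_wnorm V hVmeas hV0 β hβ μ₁ μ₂ h₁ h₂
  · rw [show ({r : ℝ | ∃ φ : X → ℝ, Measurable φ ∧ osc β V φ ≤ 1 ∧
        r = ∫ x, φ x ∂μ₁ - ∫ x, φ x ∂μ₂} : Set ℝ)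
      = {r : ℝ | ∃ φ : X → ℝ, Measurable φ ∧ wnorm β V φ ≤ 1 ∧
        r = ∫ x, φ x ∂μ₁ - ∫ x, φ x ∂μ₂}
      from setEq V hVmeas hV0 β hβ μ₁ μ₂ h₁ h₂]
    exact aux_wnorm V hVmeas hV0 β hβ μ₁ μ₂ h₁ h₂


end PoissonPaper
end
end

section
/- Let α₀ ∈ (0, ᾱ) and γ₀ ∈ (γ + 2K/R, 1), set β = α₀/K and α = max(1 − (ᾱ − α₀), (2 + Rβγ₀)/(2 + Rβ)). Then γ < α < 1, and for every θ ∈ Θ and every measurable φ : X → ℝ with |||φ|||_β < ∞ one has |||P_θ*φ|||_β ≤ α |||φ|||_β. -/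
open MeasureTheory ProbabilityTheory ENNReal

noncomputable section

namespace PoissonPaper

variable {X : Type*} [MeasurableSpace X]

lemma aux_integral_bound (V ψ : X → ℝ) (hV : Measurable V) (hV0 : ∀ x, 0 ≤ V x)
    (hψ : Measurable ψ) (M β : ℝ)
    (hψb : ∀ u, |ψ u| ≤ M * (1 + β * V u)) (m : Measure X) [IsFiniteMeasure m]
    (hfin : ∫⁻ u, ENNReal.ofReal (V u) ∂m ≠ ⊤) :
    Integrable ψ m ∧
      |∫ u, ψ u ∂m| ≤
        M * ((m Set.univ).toReal + β * (∫⁻ u, ENNReal.ofReal (V u) ∂m).toReal) := by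
  have hVint : Integrable V m := by
    refine ⟨hV.aestronglyMeasurable, ?_⟩
    rw [hasFiniteIntegral_iff_ofReal (ae_of_all _ hV0)]
    exact hfin.lt_top
  have hVeq : ∫ u, V u ∂m = (∫⁻ u, ENNReal.ofReal (V u) ∂m).toReal :=
    integral_eq_lintegral_of_nonneg_ae (ae_of_all _ hV0) hV.aestronglyMeasurable
  have hg : Integrable (fun u => M * (1 + β * V u)) m :=
    ((integrable_const (1:ℝ)).add (hVint.const_mul β)).const_mul M
  have hψint : Integrable ψ m := by
    refine hg.mono' hψ.aestronglyMeasurable (ae_of_all _ fun u => ?_)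
    rw [Real.norm_eq_abs]; exact hψb u
  refine ⟨hψint, ?_⟩
  calc |∫ u, ψ u ∂m| ≤ ∫ u, |ψ u| ∂m := by
        simpa [Real.norm_eq_abs] using norm_integral_le_integral_norm (μ := m) ψ
    _ ≤ ∫ u, M * (1 + β * V u) ∂m := integral_mono hψint.abs hg hψb
    _ = M * ((m Set.univ).toReal + β * (∫⁻ u, ENNReal.ofReal (V u) ∂m).toReal) := by
        rw [integral_const_mul, integral_add (integrable_const 1) (hVint.const_mul β),
          integral_const_mul, integral_const, hVeq]
        simp [smul_eq_mul, Measure.real]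


set_option maxHeartbeats 2000000 in
/-- Hairer–Mattingly contraction of the oscillation seminorm, with explicit
constants, uniform in the parameter. -/
theorem oscillation_contraction_uniform
    {X : Type*} [MeasurableSpace X] {k : ℕ} {Θ : Set (EuclideanSpace ℝ (Fin k))}
    (hΘ : Θ.Nonempty) (P : Θ → Kernel X X) [∀ θ, IsMarkovKernel (P θ)]
    (V : X → ℝ) (hVmeas : Measurable V) (hV0 : ∀ x, 0 ≤ V x)
    (γ K : ℝ) (hγ : γ ∈ Set.Ioo (0:ℝ) 1) (hK : 0 < K)
    (hdrift : ∀ θ, Drift (P θ) V γ K)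
    (R : ℝ) (hR : 2 * K / (1 - γ) < R)
    (μbar : Measure X) [IsProbabilityMeasure μbar]
    (αbar : ℝ) (hαbar : αbar ∈ Set.Ioo (0:ℝ) 1)
    (hminor : ∀ θ, ∀ x, V x ≤ R → ∀ A : Set X, MeasurableSet A →
      ENNReal.ofReal αbar * μbar A ≤ (P θ) x A)
    (α₀ : ℝ) (hα₀ : α₀ ∈ Set.Ioo 0 αbar)
    (γ₀ : ℝ) (hγ₀ : γ₀ ∈ Set.Ioo (γ + 2 * K / R) 1)
    (β : ℝ) (hβ : β = α₀ / K)
    (α : ℝ) (hα : α = max (1 - (αbar - α₀)) ((2 + R * β * γ₀) / (2 + R * β))) :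
    γ < α ∧ α < 1 ∧
      ∀ θ, ∀ φ : X → ℝ, Measurable φ → osc β V φ < ⊤ →
        osc β V (act (P θ) φ) ≤ ENNReal.ofReal α * osc β V φ := by
  obtain ⟨hγpos, hγ1⟩ := hγ
  obtain ⟨hαbpos, hαb1⟩ := hαbar
  obtain ⟨hα₀pos, hα₀b⟩ := hα₀
  have hRpos : 0 < R := lt_trans (div_pos (by linarith) (by linarith)) hR
  have hβpos : 0 < β := by rw [hβ]; positivity
  have hγγ₀ : γ < γ₀ := lt_of_le_of_lt (le_add_of_nonneg_right (div_nonneg (by linarith) hRpos.le)) hγ₀.1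
  have h2K : 2 * K < (γ₀ - γ) * R := by
    have h : 2 * K / R < γ₀ - γ := by linarith [hγ₀.1]
    calc 2 * K = 2 * K / R * R := by field_simp
      _ < (γ₀ - γ) * R := by apply mul_lt_mul_of_pos_right h hRpos
  have hden : (0:ℝ) < 2 + R * β := by positivity
  have hq1 : (2 + R * β * γ₀) / (2 + R * β) < 1 := by
    rw [div_lt_one hden]; nlinarith [hγ₀.2, mul_pos hRpos hβpos]
  have hγα : γ < α := by
    have : γ < (2 + R * β * γ₀) / (2 + R * β) := by
      rw [lt_div_iff₀ hden]; nlinarith [mul_pos hRpos hβpos]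
    exact lt_of_lt_of_le this (hα ▸ le_max_right _ _)
  have hα1 : α < 1 := by
    rw [hα]; exact max_lt (by linarith) hq1
  have hαnn : 0 ≤ α := le_trans hγpos.le hγα.le
  have hαL : 1 - (αbar - α₀) ≤ α := hα ▸ le_max_left _ _
  have hαR : 2 + R * β * γ₀ ≤ α * (2 + R * β) := by
    rw [← div_le_iff₀ hden]; exact hα ▸ le_max_right _ _
  have hβK : β * K = α₀ := by rw [hβ]; field_simp
  refine ⟨hγα, hα1, ?_⟩
  intro θ φ hφm hosc
  rcases isEmpty_or_nonempty X with hX | hX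
  · have : osc β V (act (P θ) φ) = 0 := by simp [osc]
    simp [this]
  obtain ⟨x₀⟩ := hX
  set M : ℝ := (osc β V φ).toReal with hMdef
  have hMnn : 0 ≤ M := ENNReal.toReal_nonneg
  have hpair : ∀ u v, |φ u - φ v| ≤ M * (2 + β * V u + β * V v) := by
    intro u v
    by_cases huv : u = v
    · subst huv; simp only [sub_self, abs_zero]
      have h1 : (0:ℝ) ≤ 2 + β * V u + β * V u := by
        linarith [mul_nonneg hβpos.le (hV0 u)]
      exact mul_nonneg hMnn h1
    · have hd : dBeta β V u v = 2 + β * V u + β * V v := if_neg huv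
      have hdpos : (0:ℝ) < 2 + β * V u + β * V v := by
        linarith [mul_nonneg hβpos.le (hV0 u), mul_nonneg hβpos.le (hV0 v)]
      have h1 : ENNReal.ofReal (|φ u - φ v| / dBeta β V u v) ≤ osc β V φ :=
        le_iSup₂ (f := fun x y => ENNReal.ofReal (|φ x - φ y| / dBeta β V x y)) u v
      have h2 := (ENNReal.ofReal_le_iff_le_toReal hosc.ne).1 h1
      rw [hd, div_le_iff₀ hdpos] at h2
      rw [← hMdef] at h2
      linarith
  -- choice of centering constant
  set S : Set ℝ := Set.range (fun u => φ u - M * (1 + β * V u)) with hSdef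
  have hSne : S.Nonempty := ⟨_, ⟨x₀, rfl⟩⟩
  have hbdd : BddAbove S := by
    refine ⟨φ x₀ + M * (1 + β * V x₀), ?_⟩
    rintro _ ⟨u, rfl⟩
    dsimp only
    have := le_of_abs_le (hpair u x₀)
    nlinarith
  set c : ℝ := sSup S with hcdef
  set ψ : X → ℝ := fun u => φ u - c with hψdef
  have hψm : Measurable ψ := hφm.sub measurable_const
  have hcle : ∀ u, c ≤ φ u + M * (1 + β * V u) := by
    intro u
    refine csSup_le hSne ?_
    rintro _ ⟨v, rfl⟩
    dsimp only
    have := le_of_abs_le (hpair v u)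
    nlinarith
  have hlec : ∀ u, φ u - M * (1 + β * V u) ≤ c := fun u => le_csSup hbdd ⟨u, rfl⟩
  have hψb : ∀ u, |ψ u| ≤ M * (1 + β * V u) := by
    intro u
    rw [abs_le]
    constructor
    · have := hcle u; simp only [hψdef]; linarith
    · have := hlec u; simp only [hψdef]; linarith
  have hfin : ∀ u, ∫⁻ y, ENNReal.ofReal (V y) ∂(P θ u) ≠ ⊤ :=
    fun u => (lt_of_le_of_lt (hdrift θ u) ofReal_lt_top).ne
  have hIψ : ∀ u, Integrable ψ (P θ u) :=
    fun u => (aux_integral_bound V ψ hVmeas hV0 hψm M β hψb (P θ u) (hfin u)).1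
  have hPbound : ∀ u, |∫ y, ψ y ∂(P θ u)| ≤ M * (1 + β * (γ * V u + K)) := by
    intro u
    have h := (aux_integral_bound V ψ hVmeas hV0 hψm M β hψb (P θ u) (hfin u)).2
    have hu : ((P θ u) Set.univ).toReal = 1 := by simp
    have ht : (∫⁻ y, ENNReal.ofReal (V y) ∂(P θ u)).toReal ≤ γ * V u + K :=
      ENNReal.toReal_le_of_le_ofReal (by nlinarith [mul_nonneg hγpos.le (hV0 u)]) (hdrift θ u)
    rw [hu] at h
    nlinarith [mul_nonneg (mul_nonneg hMnn hβpos.le) (sub_nonneg.2 ht)]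
  have hact : ∀ u, act (P θ) φ u = (∫ y, ψ y ∂(P θ u)) + c := by
    intro u
    have : act (P θ) φ u = ∫ y, (ψ y + c) ∂(P θ u) := by
      simp [act, hψdef]
    rw [this, integral_add (hIψ u) (integrable_const c), integral_const]
    simp
  -- minorization part
  haveI : IsFiniteMeasure ((ENNReal.ofReal αbar) • μbar) :=
    Measure.smul_finite μbar ofReal_ne_top
  set w : ℝ := ∫ y, ψ y ∂((ENNReal.ofReal αbar) • μbar) with hwdef
  have hC : ∀ u, V u ≤ R →
      |(∫ y, ψ y ∂(P θ u)) - w| ≤ M * ((1 - αbar) + β * (γ * V u + K)) := by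
    intro u hu
    have hle' : (ENNReal.ofReal αbar) • μbar ≤ P θ u := by
      refine Measure.le_iff.2 fun s hs => ?_
      simpa using hminor θ u hu s hs
    set ν : Measure X := P θ u - (ENNReal.ofReal αbar) • μbar with hνdef
    have hdec : ν + (ENNReal.ofReal αbar) • μbar = P θ u :=
      Measure.sub_add_cancel_of_le hle'
    have hνle : ν ≤ P θ u := Measure.sub_le
    have hνfin : ∫⁻ y, ENNReal.ofReal (V y) ∂ν ≠ ⊤ :=
      (lt_of_le_of_lt (lintegral_mono' hνle le_rfl) (hfin u).lt_top).ne
    have hIsum : Integrable ψ (ν + (ENNReal.ofReal αbar) • μbar) := hdec ▸ hIψ u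
    have hI1 : Integrable ψ ν := (integrable_add_measure.1 hIsum).1
    have hI2 : Integrable ψ ((ENNReal.ofReal αbar) • μbar) := (integrable_add_measure.1 hIsum).2
    have hsplit : ∫ y, ψ y ∂(P θ u) = (∫ y, ψ y ∂ν) + w := by
      rw [← hdec, integral_add_measure hI1 hI2]
    have hmass : (ν Set.univ).toReal ≤ 1 - αbar := by
      have h1 : ν Set.univ + ENNReal.ofReal αbar = 1 := by
        have := congrArg (fun m : Measure X => m Set.univ) hdec
        simpa [Measure.add_apply] using this
      have h2 : ν Set.univ ≤ ENNReal.ofReal (1 - αbar) := by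
        have h3 : ν Set.univ = 1 - ENNReal.ofReal αbar :=
          ENNReal.eq_sub_of_add_eq ofReal_ne_top h1
        rw [h3, ENNReal.ofReal_sub _ hαbpos.le, ENNReal.ofReal_one]
      calc (ν Set.univ).toReal ≤ (ENNReal.ofReal (1 - αbar)).toReal :=
            ENNReal.toReal_mono ofReal_ne_top h2
        _ = 1 - αbar := ENNReal.toReal_ofReal (by linarith)
      
    have hνV : (∫⁻ y, ENNReal.ofReal (V y) ∂ν).toReal ≤ γ * V u + K :=
      ENNReal.toReal_le_of_le_ofReal (by nlinarith [mul_nonneg hγpos.le (hV0 u)])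
        (le_trans (lintegral_mono' hνle le_rfl) (hdrift θ u))
    have hb := (aux_integral_bound V ψ hVmeas hV0 hψm M β hψb ν hνfin).2
    rw [hsplit]
    have : |(∫ y, ψ y ∂ν) + w - w| = |∫ y, ψ y ∂ν| := by ring_nf
    rw [this]
    nlinarith [mul_nonneg hMnn (sub_nonneg.2 hmass),
      mul_nonneg (mul_nonneg hMnn hβpos.le) (sub_nonneg.2 hνV),
      ENNReal.toReal_nonneg (a := ∫⁻ y, ENNReal.ofReal (V y) ∂ν),
      ENNReal.toReal_nonneg (a := ν Set.univ)]
  -- pointwise contraction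
  have hpt : ∀ x y, |act (P θ) φ x - act (P θ) φ y| ≤ α * M * (2 + β * V x + β * V y) := by
    intro x y
    rw [hact x, hact y]
    have heq : (∫ z, ψ z ∂(P θ x)) + c - ((∫ z, ψ z ∂(P θ y)) + c)
        = (∫ z, ψ z ∂(P θ x)) - (∫ z, ψ z ∂(P θ y)) := by ring
    rw [heq]
    by_cases hxy : V x ≤ R ∧ V y ≤ R
    · -- small set case
      have h1 := hC x hxy.1
      have h2 := hC y hxy.2
      have habs : |(∫ z, ψ z ∂(P θ x)) - (∫ z, ψ z ∂(P θ y))|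
          ≤ M * ((1 - αbar) + β * (γ * V x + K)) + M * ((1 - αbar) + β * (γ * V y + K)) := by
        have := abs_sub_abs_le_abs_sub ((∫ z, ψ z ∂(P θ x)) - w) ((∫ z, ψ z ∂(P θ y)) - w)
        calc |(∫ z, ψ z ∂(P θ x)) - (∫ z, ψ z ∂(P θ y))|
            = |((∫ z, ψ z ∂(P θ x)) - w) - ((∫ z, ψ z ∂(P θ y)) - w)| := by ring_nf
          _ ≤ |(∫ z, ψ z ∂(P θ x)) - w| + |(∫ z, ψ z ∂(P θ y)) - w| := abs_sub _ _
          _ ≤ _ := add_le_add h1 h2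
      refine le_trans habs ?_
      have hsc : ((1 - αbar) + β * (γ * V x + K)) + ((1 - αbar) + β * (γ * V y + K))
          ≤ α * (2 + β * V x + β * V y) := by
        nlinarith [mul_nonneg (mul_nonneg (sub_nonneg.2 hγα.le) hβpos.le) (hV0 x),
          mul_nonneg (mul_nonneg (sub_nonneg.2 hγα.le) hβpos.le) (hV0 y)]
      nlinarith
    · -- drift case
      have hSR : R ≤ V x + V y := by
        rcases not_and_or.1 hxy with h | h
        · push_neg at h; linarith [hV0 y]
        · push_neg at h; linarith [hV0 x]
      have habs : |(∫ z, ψ z ∂(P θ x)) - (∫ z, ψ z ∂(P θ y))|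
          ≤ M * (1 + β * (γ * V x + K)) + M * (1 + β * (γ * V y + K)) :=
        le_trans (abs_sub _ _) (add_le_add (hPbound x) (hPbound y))
      refine le_trans habs ?_
      have hsc : (1 + β * (γ * V x + K)) + (1 + β * (γ * V y + K))
          ≤ α * (2 + β * V x + β * V y) := by
        have hs : R ≤ V x + V y := hSR
        have hA : 2 * K ≤ (γ₀ - γ) * (V x + V y) :=
          le_trans h2K.le (mul_le_mul_of_nonneg_left hs (by linarith))
        have step1 : (1 + β * (γ * V x + K)) + (1 + β * (γ * V y + K))
            ≤ 2 + β * γ₀ * (V x + V y) := by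
          nlinarith [mul_nonneg hβpos.le (sub_nonneg.2 hA)]
        have hsp : (0:ℝ) ≤ 2 + β * (V x + V y) := by
          nlinarith [mul_nonneg hβpos.le (le_trans hRpos.le hs)]
        have hb1 : (2 + R * β * γ₀) * (2 + β * (V x + V y))
            ≤ (α * (2 + R * β)) * (2 + β * (V x + V y)) :=
          mul_le_mul_of_nonneg_right hαR hsp
        have hb2 : (0:ℝ) ≤ β * (1 - γ₀) * ((V x + V y) - R) :=
          mul_nonneg (mul_nonneg hβpos.le (by linarith [hγ₀.2])) (by linarith)
        have step2 : 2 + β * γ₀ * (V x + V y) ≤ α * (2 + β * (V x + V y)) := by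
          nlinarith [hden]
        nlinarith [step1, step2]
      nlinarith
  -- conclude
  have hfinal : osc β V (act (P θ) φ) ≤ ENNReal.ofReal (α * M) := by
    refine iSup_le fun x => iSup_le fun y => ?_
    by_cases hxy : x = y
    · subst hxy; simp [dBeta]
    · have hd : dBeta β V x y = 2 + β * V x + β * V y := if_neg hxy
      have hdpos : (0:ℝ) < 2 + β * V x + β * V y := by
        linarith [mul_nonneg hβpos.le (hV0 x), mul_nonneg hβpos.le (hV0 y)]
      apply ENNReal.ofReal_le_ofReal
      rw [hd, div_le_iff₀ hdpos]
      exact hpt x y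
  calc osc β V (act (P θ) φ) ≤ ENNReal.ofReal (α * M) := hfinal
    _ = ENNReal.ofReal α * ENNReal.ofReal M := ENNReal.ofReal_mul hαnn
    _ = ENNReal.ofReal α * osc β V φ := by rw [hMdef, ENNReal.ofReal_toReal hosc.ne]


end PoissonPaper
end
end

section
/- There exist α ∈ (0, 1) and β > 0 such that for every θ ∈ Θ and every pair of probability measures μ₁, μ₂ on X with ∫ V dμ₁ < ∞ and ∫ V dμ₂ < ∞ one has σ_β(P_θ μ₁, P_θ μ₂) ≤ α σ_β(μ₁, μ₂). -/
open MeasureTheory ProbabilityTheory ENNReal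

noncomputable section

namespace PoissonPaper

variable {X : Type*} [MeasurableSpace X]

lemma lint_ofReal_eq {V : X → ℝ} (hV0 : ∀ x, 0 ≤ V x) (μ : Measure X) :
    ∫⁻ x, (‖V x‖₊ : ℝ≥0∞) ∂μ = ∫⁻ x, ENNReal.ofReal (V x) ∂μ := by
  refine lintegral_congr fun x => ?_
  rw [← enorm_eq_nnnorm, ← ofReal_norm, Real.norm_of_nonneg (hV0 x)]

lemma integrable_of_lint {V : X → ℝ} (hVmeas : Measurable V) (hV0 : ∀ x, 0 ≤ V x)
    {μ : Measure X} (h : ∫⁻ x, ENNReal.ofReal (V x) ∂μ < ⊤) : Integrable V μ := by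
  refine ⟨hVmeas.aestronglyMeasurable, ?_⟩
  rw [HasFiniteIntegral]
  simp only [enorm_eq_nnnorm]
  rw [lint_ofReal_eq hV0]
  exact h

lemma lint_of_integrable {V : X → ℝ} (hV0 : ∀ x, 0 ≤ V x)
    {μ : Measure X} (h : Integrable V μ) : ∫⁻ x, ENNReal.ofReal (V x) ∂μ < ⊤ := by
  rw [← lint_ofReal_eq hV0]
  exact h.2

lemma integrable_one_add {β : ℝ} {V : X → ℝ} (hVmeas : Measurable V)
    {μ : Measure X} [IsFiniteMeasure μ] (h : Integrable V μ) :
    Integrable (fun x => 1 + β * V x) μ :=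
  (integrable_const 1).add (h.const_mul β)

lemma bind_add (μ ν : Measure X) (P : Kernel X X) :
    (μ + ν).bind P = μ.bind P + ν.bind P := by
  ext A hA
  rw [Measure.add_apply, Measure.bind_apply hA (Kernel.measurable P).aemeasurable,
    Measure.bind_apply hA (Kernel.measurable P).aemeasurable, Measure.bind_apply hA (Kernel.measurable P).aemeasurable,
    lintegral_add_measure]


lemma ofReal_abs_split (t : ℝ) :
    ENNReal.ofReal ‖t‖ = ENNReal.ofReal t + ENNReal.ofReal (-t) := by
  rcases le_total 0 t with h | h
  · rw [Real.norm_of_nonneg h, ENNReal.ofReal_of_nonpos (neg_nonpos.mpr h), add_zero]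
  · rw [Real.norm_of_nonpos h, ENNReal.ofReal_of_nonpos h, zero_add]

lemma integral_bind' (ρ : Measure X) [IsFiniteMeasure ρ] (P : Kernel X X) [IsMarkovKernel P]
    {φ : X → ℝ} (hφ : Measurable φ) (hint : Integrable φ (ρ.bind P)) :
    ∫ y, φ y ∂(ρ.bind P) = ∫ x, ∫ y, φ y ∂(P x) ∂ρ := by
  set gp : X → ℝ≥0∞ := fun x => ∫⁻ y, ENNReal.ofReal (φ y) ∂(P x) with hgp
  set gn : X → ℝ≥0∞ := fun x => ∫⁻ y, ENNReal.ofReal (-φ y) ∂(P x) with hgn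
  have hgpm : Measurable gp :=
    Measurable.lintegral_kernel_prod_right (f := fun _ y => ENNReal.ofReal (φ y))
      (hφ.ennreal_ofReal.comp measurable_snd)
  have hgnm : Measurable gn :=
    Measurable.lintegral_kernel_prod_right (f := fun _ y => ENNReal.ofReal (-φ y))
      (hφ.neg.ennreal_ofReal.comp measurable_snd)
  have habs : ∫⁻ y, (‖φ y‖₊ : ℝ≥0∞) ∂(ρ.bind P) < ⊤ := hint.2
  have habs' : ∫⁻ y, ENNReal.ofReal (φ y) ∂(ρ.bind P) + ∫⁻ y, ENNReal.ofReal (-φ y) ∂(ρ.bind P)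
      < ⊤ := by
    rw [← lintegral_add_left (hφ.ennreal_ofReal)]
    refine lt_of_le_of_lt (le_of_eq ?_) habs
    refine lintegral_congr fun y => ?_
    rw [← enorm_eq_nnnorm, ← ofReal_norm, ofReal_abs_split]
  have hbp : ∫⁻ y, ENNReal.ofReal (φ y) ∂(ρ.bind P) = ∫⁻ x, gp x ∂ρ :=
    Measure.lintegral_bind (Kernel.measurable P).aemeasurable hφ.ennreal_ofReal.aemeasurable
  have hbn : ∫⁻ y, ENNReal.ofReal (-φ y) ∂(ρ.bind P) = ∫⁻ x, gn x ∂ρ :=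
    Measure.lintegral_bind (Kernel.measurable P).aemeasurable hφ.neg.ennreal_ofReal.aemeasurable
  have hfin : ∫⁻ x, gp x ∂ρ + ∫⁻ x, gn x ∂ρ < ⊤ := by rw [← hbp, ← hbn]; exact habs'
  have hgpfin : ∫⁻ x, gp x ∂ρ ≠ ⊤ := (lt_of_le_of_lt le_self_add hfin).ne
  have hgnfin : ∫⁻ x, gn x ∂ρ ≠ ⊤ := (lt_of_le_of_lt le_add_self hfin).ne
  have haep : ∀ᵐ x ∂ρ, gp x < ⊤ := ae_lt_top hgpm hgpfin
  have haen : ∀ᵐ x ∂ρ, gn x < ⊤ := ae_lt_top hgnm hgnfin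
  have hcongr : ∀ᵐ x ∂ρ, ∫ y, φ y ∂(P x) = (gp x).toReal - (gn x).toReal := by
    filter_upwards [haep, haen] with x hxp hxn
    have hintx : Integrable φ (P x) := by
      refine ⟨hφ.aestronglyMeasurable, ?_⟩
      rw [HasFiniteIntegral]
      calc ∫⁻ y, (‖φ y‖₊ : ℝ≥0∞) ∂(P x)
          = ∫⁻ y, (ENNReal.ofReal (φ y) + ENNReal.ofReal (-φ y)) ∂(P x) := by
            refine lintegral_congr fun y => ?_
            rw [← enorm_eq_nnnorm, ← ofReal_norm, ofReal_abs_split]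
        _ = gp x + gn x := lintegral_add_left (hφ.ennreal_ofReal) _
        _ < ⊤ := ENNReal.add_lt_top.mpr ⟨hxp, hxn⟩
    exact integral_eq_lintegral_pos_part_sub_lintegral_neg_part hintx
  rw [integral_eq_lintegral_pos_part_sub_lintegral_neg_part hint, hbp, hbn,
    integral_congr_ae hcongr,
    integral_sub (integrable_toReal_of_lintegral_ne_top hgpm.aemeasurable hgpfin)
      (integrable_toReal_of_lintegral_ne_top hgnm.aemeasurable hgnfin),
    integral_toReal hgpm.aemeasurable haep, integral_toReal hgnm.aemeasurable haen]


lemma jordan_split (b₁ b₂ : Measure X) [IsFiniteMeasure b₁] [IsFiniteMeasure b₂] :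
    ∃ i : Set X, MeasurableSet i ∧
      (b₁.toSignedMeasure - b₂.toSignedMeasure).toJordanDecomposition.posPart
        + b₂.restrict i = b₁.restrict i ∧
      (b₁.toSignedMeasure - b₂.toSignedMeasure).toJordanDecomposition.negPart
        + b₁.restrict iᶜ = b₂.restrict iᶜ := by
  set s := b₁.toSignedMeasure - b₂.toSignedMeasure with hs
  obtain ⟨i, hi₁, hi₂, hi₃, hp, hn⟩ := s.toJordanDecomposition_spec
  have hsval : ∀ A : Set X, MeasurableSet A → s A = (b₁ A).toReal - (b₂ A).toReal := by
    intro A hA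
    rw [hs, VectorMeasure.sub_apply, Measure.toSignedMeasure_apply_measurable hA,
      Measure.toSignedMeasure_apply_measurable hA]
    rfl
  refine ⟨i, hi₁, ?_, ?_⟩
  · ext A hA
    rw [Measure.add_apply, hp, SignedMeasure.toMeasureOfZeroLE_apply s hi₂ hi₁ hA,
      Measure.restrict_apply hA, Measure.restrict_apply hA]
    have h1 : s (i ∩ A) = (b₁ (i ∩ A)).toReal - (b₂ (i ∩ A)).toReal :=
      hsval _ (hi₁.inter hA)
    have hfin1 : b₁ (i ∩ A) ≠ ⊤ := measure_ne_top _ _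
    have hfin2 : b₂ (i ∩ A) ≠ ⊤ := measure_ne_top _ _
    rw [Set.inter_comm A i]
    refine (ENNReal.toReal_eq_toReal_iff' (by finiteness) hfin1).mp ?_
    rw [ENNReal.toReal_add (by finiteness) hfin2]
    simp only [ENNReal.coe_toReal, NNReal.coe_mk]
    linarith [h1]
  · ext A hA
    rw [Measure.add_apply, hn, SignedMeasure.toMeasureOfLEZero_apply s hi₃ hi₁.compl hA,
      Measure.restrict_apply hA, Measure.restrict_apply hA]
    have h1 : s (iᶜ ∩ A) = (b₁ (iᶜ ∩ A)).toReal - (b₂ (iᶜ ∩ A)).toReal :=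
      hsval _ (hi₁.compl.inter hA)
    have hfin1 : b₁ (iᶜ ∩ A) ≠ ⊤ := measure_ne_top _ _
    have hfin2 : b₂ (iᶜ ∩ A) ≠ ⊤ := measure_ne_top _ _
    rw [Set.inter_comm A iᶜ]
    refine (ENNReal.toReal_eq_toReal_iff' (by finiteness) hfin2).mp ?_
    rw [ENNReal.toReal_add (by finiteness) hfin1]
    simp only [ENNReal.coe_toReal, NNReal.coe_mk]
    linarith [h1]


lemma arith_case1 {β γ αbar S α t : ℝ} (ht : t ≤ 2 - αbar + β * γ * S) (hS : 0 ≤ S)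
    (hβ : 0 ≤ β) (hα2 : 1 - αbar / 2 ≤ α) (hα3 : γ ≤ α) :
    t ≤ α * (2 + β * S) := by
  nlinarith [mul_le_mul_of_nonneg_right hα3 (mul_nonneg hβ hS)]

lemma arith_case2 {β γ γ' K R S α t : ℝ} (ht : t ≤ 2 + β * γ * S + 2 * (β * K))
    (hβ : 0 < β) (hR : 0 < R) (hγγ'₀ : γ ≤ γ') (hγ'1 : γ' ≤ 1)
    (hKR : (γ' - γ) * R = 2 * K) (hS : R ≤ S) (hS0 : 0 ≤ S)
    (hα1 : (2 + β * γ' * R) / (2 + β * R) ≤ α) :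
    t ≤ α * (2 + β * S) := by
  have hden : (0:ℝ) < 2 + β * R := by nlinarith
  have h2 : t ≤ 2 + β * γ' * S := by
    have h : β * ((γ' - γ) * R) ≤ β * ((γ' - γ) * S) := by
      apply mul_le_mul_of_nonneg_left _ hβ.le
      apply mul_le_mul_of_nonneg_left hS (by linarith)
    rw [hKR] at h; nlinarith
  have h3 : 2 + β * γ' * S ≤ ((2 + β * γ' * R) / (2 + β * R)) * (2 + β * S) := by
    rw [div_mul_eq_mul_div, le_div_iff₀ hden]
    nlinarith [mul_nonneg (mul_nonneg hβ.le (sub_nonneg.mpr hS)) (sub_nonneg.mpr hγ'1)]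
  have h4 : ((2 + β * γ' * R) / (2 + β * R)) * (2 + β * S) ≤ α * (2 + β * S) :=
    mul_le_mul_of_nonneg_right hα1 (by nlinarith)
  linarith

lemma lint_f_bound (P : Kernel X X) [IsMarkovKernel P] {V : X → ℝ} (hVmeas : Measurable V)
    (hV0 : ∀ x, 0 ≤ V x) {γ K β : ℝ} (hβ : 0 ≤ β)
    (hdrift : Drift P V γ K) (x : X) (hγVK : 0 ≤ γ * V x + K) :
    ∫⁻ z, ENNReal.ofReal (1 + β * V z) ∂(P x) ≤ ENNReal.ofReal (1 + β * (γ * V x + K)) := by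
  have h1 : ∀ z : X, ENNReal.ofReal (1 + β * V z)
      = 1 + ENNReal.ofReal β * ENNReal.ofReal (V z) := fun z => by
    rw [ENNReal.ofReal_add zero_le_one (mul_nonneg hβ (hV0 z)), ENNReal.ofReal_one,
      ENNReal.ofReal_mul hβ]
  calc ∫⁻ z, ENNReal.ofReal (1 + β * V z) ∂(P x)
      = ∫⁻ z, (1 + ENNReal.ofReal β * ENNReal.ofReal (V z)) ∂(P x) := lintegral_congr h1
    _ = 1 + ENNReal.ofReal β * ∫⁻ z, ENNReal.ofReal (V z) ∂(P x) := by
        rw [lintegral_add_left measurable_const, lintegral_const_mul _ hVmeas.ennreal_ofReal]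
        simp
    _ ≤ 1 + ENNReal.ofReal β * ENNReal.ofReal (γ * V x + K) := by
        gcongr
        exact hdrift x
    _ = ENNReal.ofReal (1 + β * (γ * V x + K)) := by
        rw [ENNReal.ofReal_add zero_le_one (mul_nonneg hβ hγVK), ENNReal.ofReal_one,
          ENNReal.ofReal_mul hβ]

lemma integrable_of_lint' {V : X → ℝ} (hVmeas : Measurable V) (hV0 : ∀ x, 0 ≤ V x)
    {μ : Measure X} (h : ∫⁻ x, ENNReal.ofReal (V x) ∂μ < ⊤) : Integrable V μ := by
  refine ⟨hVmeas.aestronglyMeasurable, ?_⟩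
  rw [HasFiniteIntegral]
  refine lt_of_le_of_lt (le_of_eq (lintegral_congr fun x => ?_)) h
  rw [← ofReal_norm, Real.norm_of_nonneg (hV0 x)]

lemma integral_f_le {V : X → ℝ} (hV0 : ∀ x, 0 ≤ V x) {β c : ℝ} (hβ : 0 ≤ β) (hc : 0 ≤ c)
    {μ : Measure X} [IsProbabilityMeasure μ] (hfmeas : Measurable fun z => 1 + β * V z)
    (h : ∫⁻ z, ENNReal.ofReal (1 + β * V z) ∂μ ≤ ENNReal.ofReal (1 + β * c)) :
    ∫ z, (1 + β * V z) ∂μ ≤ 1 + β * c := by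
  rw [integral_eq_lintegral_of_nonneg_ae
    (ae_of_all _ fun z => by simp only [Pi.zero_apply]; nlinarith [hV0 z])
    hfmeas.aestronglyMeasurable]
  calc (∫⁻ z, ENNReal.ofReal (1 + β * V z) ∂μ).toReal
      ≤ (ENNReal.ofReal (1 + β * c)).toReal := ENNReal.toReal_mono ofReal_ne_top h
    _ = 1 + β * c := ENNReal.toReal_ofReal (by nlinarith)

lemma key_pointwise
    (P : Kernel X X) [IsMarkovKernel P] {V : X → ℝ} (hVmeas : Measurable V)
    (hV0 : ∀ x, 0 ≤ V x) {γ K R αbar β α : ℝ}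
    (hγ : γ ∈ Set.Ioo (0:ℝ) 1) (hK : 0 < K) (hR : 2 * K / (1 - γ) < R)
    (hαbar : αbar ∈ Set.Ioo (0:ℝ) 1)
    (hdrift : Drift P V γ K)
    (μbar : Measure X) [IsProbabilityMeasure μbar]
    (hminor : ∀ x, V x ≤ R → ∀ A : Set X, MeasurableSet A →
      ENNReal.ofReal αbar * μbar A ≤ P x A)
    (hβdef : β = αbar / (2 * K))
    (hα1 : (2 + β * (γ + 2 * K / R) * R) / (2 + β * R) ≤ α)
    (hα2 : 1 - αbar / 2 ≤ α) (hα3 : γ ≤ α)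
    {φ : X → ℝ} (hφ : Measurable φ) (hφb : ∀ z, |φ z| ≤ 1 + β * V z)
    (x y : X) :
    ∫ z, φ z ∂(P x) - ∫ z, φ z ∂(P y) ≤ α * (2 + β * V x + β * V y) := by
  have hγ0 := hγ.1; have hγ1 := hγ.2
  have hβ : 0 < β := by rw [hβdef]; exact div_pos hαbar.1 (by linarith)
  have hR0 : 0 < R := lt_trans (div_pos (by linarith) (by linarith)) hR
  have hKR : 2 * K < (1 - γ) * R := by
    rw [div_lt_iff₀ (by linarith)] at hR; linarith
  obtain ⟨γ', hγ'def⟩ : ∃ γ', γ' = γ + 2 * K / R := ⟨_, rfl⟩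
  have hγγ'₀ : γ ≤ γ' := by
    rw [hγ'def]; have : 0 < 2 * K / R := div_pos (by linarith) hR0; linarith
  have hγ'1 : γ' < 1 := by
    rw [hγ'def]
    have : 2 * K / R < 1 - γ := by rw [div_lt_iff₀ hR0]; linarith
    linarith
  have hγγ' : (γ' - γ) * R = 2 * K := by rw [hγ'def]; field_simp; ring
  obtain ⟨f, hfdef⟩ : ∃ f : X → ℝ, f = fun z => 1 + β * V z := ⟨_, rfl⟩
  have hfz : ∀ z, f z = 1 + β * V z := fun z => by rw [hfdef]
  have hfmeas : Measurable f := by rw [hfdef]; exact measurable_const.add (hVmeas.const_mul β)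
  have hf0 : ∀ z, 0 ≤ f z := fun z => by rw [hfz z]; nlinarith [hV0 z]
  have hγVK : ∀ w : X, 0 ≤ γ * V w + K := fun w => by nlinarith [hV0 w]
  have hlf : ∀ w : X, ∫⁻ z, ENNReal.ofReal (f z) ∂(P w)
      ≤ ENNReal.ofReal (1 + β * (γ * V w + K)) := fun w => by
    rw [hfdef]; exact lint_f_bound P hVmeas hV0 hβ.le hdrift w (hγVK w)
  have hIf : ∀ w : X, Integrable f (P w) := fun w =>
    integrable_of_lint' hfmeas hf0 (lt_of_le_of_lt (hlf w) ofReal_lt_top)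
  have hφb' : ∀ z, |φ z| ≤ f z := fun z => by rw [hfz z]; exact hφb z
  have hIφ : ∀ (μ : Measure X), Integrable f μ → Integrable φ μ := fun μ hf =>
    hf.mono hφ.aestronglyMeasurable (ae_of_all _ fun z => by
      rw [Real.norm_eq_abs, Real.norm_of_nonneg (hf0 z)]; exact hφb' z)
  have habs : ∀ (μ : Measure X), Integrable f μ → |∫ z, φ z ∂μ| ≤ ∫ z, f z ∂μ := by
    intro μ hf
    calc |∫ z, φ z ∂μ| ≤ ∫ z, |φ z| ∂μ := by
          simpa [Real.norm_eq_abs] using norm_integral_le_integral_norm (μ := μ) φ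
      _ ≤ ∫ z, f z ∂μ := integral_mono (hIφ μ hf).abs hf hφb'
  have hintf : ∀ w : X, ∫ z, f z ∂(P w) ≤ 1 + β * (γ * V w + K) := fun w => by
    rw [hfdef]
    exact integral_f_le hV0 hβ.le (hγVK w) (by rw [hfdef] at hfmeas; exact hfmeas)
      (by rw [hfdef] at hlf; exact hlf w)
  by_cases hC : V x ≤ R ∧ V y ≤ R
  · -- both in the small set: use minorization
    obtain ⟨c, hcdef⟩ : ∃ c : ℝ≥0∞, c = ENNReal.ofReal αbar := ⟨_, rfl⟩
    have hc0 : c ≠ 0 := by simp [hcdef, ENNReal.ofReal_eq_zero, not_le, hαbar.1]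
    have hcT : c ≠ ⊤ := by rw [hcdef]; exact ofReal_ne_top
    haveI : IsFiniteMeasure (c • μbar) := by
      constructor
      rw [Measure.smul_apply, smul_eq_mul, measure_univ, mul_one]
      exact Ne.lt_top hcT
    have hle : ∀ w : X, V w ≤ R → c • μbar ≤ P w := fun w hw =>
      Measure.le_iff.mpr fun A hA => by
        rw [hcdef]
        simpa [Measure.smul_apply, smul_eq_mul] using hminor w hw A hA
    have hsubeq : ∀ w : X, V w ≤ R → (P w - c • μbar) + c • μbar = P w := fun w hw =>
      Measure.sub_add_cancel_of_le (hle w hw)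
    have hIfs : Integrable f (c • μbar) := (hIf x).mono_measure (hle x hC.1)
    have hIfbar : Integrable f μbar := by
      refine ⟨hfmeas.aestronglyMeasurable, ?_⟩
      have h2 := hIfs.2
      rw [HasFiniteIntegral, lintegral_smul_measure] at h2
      rw [HasFiniteIntegral]
      exact lt_top_iff_ne_top.mpr fun h => by
        rw [h, smul_eq_mul, ENNReal.mul_top hc0] at h2; exact (lt_irrefl _ h2).elim
    have hfbar1 : 1 ≤ ∫ z, f z ∂μbar := by
      calc (1:ℝ) = ∫ _z, (1:ℝ) ∂μbar := by simp
        _ ≤ ∫ z, f z ∂μbar := integral_mono (integrable_const 1) hIfbar fun z => by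
            rw [hfz z]; nlinarith [hV0 z]
    have hcoe : c.toReal = αbar := by rw [hcdef]; exact ENNReal.toReal_ofReal hαbar.1.le
    have hdec : ∀ (ψ : X → ℝ), Integrable ψ (P x) → Integrable ψ (P y) → ∀ w : X, V w ≤ R →
        Integrable ψ (P w) →
        ∫ z, ψ z ∂(P w) = ∫ z, ψ z ∂(P w - c • μbar) + αbar * ∫ z, ψ z ∂μbar := by
      intro ψ _ _ w hw hIψP
      have h1 : Integrable ψ (P w - c • μbar) := hIψP.mono_measure Measure.sub_le
      have h2 : Integrable ψ (c • μbar) := hIψP.mono_measure (hle w hw)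
      calc ∫ z, ψ z ∂(P w) = ∫ z, ψ z ∂((P w - c • μbar) + c • μbar) := by rw [hsubeq w hw]
        _ = ∫ z, ψ z ∂(P w - c • μbar) + ∫ z, ψ z ∂(c • μbar) := integral_add_measure h1 h2
        _ = ∫ z, ψ z ∂(P w - c • μbar) + αbar * ∫ z, ψ z ∂μbar := by
            rw [integral_smul_measure, hcoe, smul_eq_mul]
    have hφx := hdec φ (hIφ _ (hIf x)) (hIφ _ (hIf y)) x hC.1 (hIφ _ (hIf x))
    have hφy := hdec φ (hIφ _ (hIf x)) (hIφ _ (hIf y)) y hC.2 (hIφ _ (hIf y))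
    have hfx := hdec f (hIf x) (hIf y) x hC.1 (hIf x)
    have hfy := hdec f (hIf x) (hIf y) y hC.2 (hIf y)
    have hax := habs _ ((hIf x).mono_measure (Measure.sub_le (μ := P x) (ν := c • μbar)))
    have hay := habs _ ((hIf y).mono_measure (Measure.sub_le (μ := P y) (ν := c • μbar)))
    have hbar := mul_le_mul_of_nonneg_left hfbar1 hαbar.1.le
    have hνx : ∫ z, f z ∂(P x - c • μbar) ≤ 1 + β * (γ * V x + K) - αbar := by
      have h1 := hintf x
      rw [hfx] at h1; linarith
    have hνy : ∫ z, f z ∂(P y - c • μbar) ≤ 1 + β * (γ * V y + K) - αbar := by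
      have h1 := hintf y
      rw [hfy] at h1; linarith
    have hK0 : K ≠ 0 := ne_of_gt hK
    have hβK : β * K = αbar / 2 := by rw [hβdef]; field_simp
    have e : β * (γ * V x + K) + β * (γ * V y + K)
        = β * γ * (V x + V y) + 2 * (β * K) := by ring
    have hfinal : ∫ z, φ z ∂(P x) - ∫ z, φ z ∂(P y)
        ≤ 2 - αbar + β * γ * (V x + V y) := by
      rw [hφx, hφy]
      have h1 := abs_le.mp hax
      have h2 := abs_le.mp hay
      linarith [h1.2, h2.1, hνx, hνy]
    have harith := arith_case1 (β := β) (γ := γ) (αbar := αbar) (S := V x + V y) (α := α)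
      hfinal (add_nonneg (hV0 x) (hV0 y)) hβ.le hα2 hα3
    have e2 : α * (2 + β * (V x + V y)) = α * (2 + β * V x + β * V y) := by ring
    linarith [harith]
  · -- outside the small set
    have hS : R < V x + V y := by
      rcases not_and_or.mp hC with h | h
      · nlinarith [hV0 y, not_le.mp h]
      · nlinarith [hV0 x, not_le.mp h]
    have hax := abs_le.mp (habs _ (hIf x))
    have hay := abs_le.mp (habs _ (hIf y))
    have e : (1 + β * (γ * V x + K)) + (1 + β * (γ * V y + K))
        = 2 + β * γ * (V x + V y) + 2 * (β * K) := by ring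
    have ht : ∫ z, φ z ∂(P x) - ∫ z, φ z ∂(P y)
        ≤ 2 + β * γ * (V x + V y) + 2 * (β * K) := by
      linarith [hax.2, hay.1, hintf x, hintf y]
    have hα1' : (2 + β * γ' * R) / (2 + β * R) ≤ α := by rw [hγ'def]; exact hα1
    have harith := arith_case2 (γ' := γ') (α := α) ht hβ hR0 hγγ'₀ hγ'1.le hγγ' hS.le
      (add_nonneg (hV0 x) (hV0 y)) hα1'
    have e2 : α * (2 + β * (V x + V y)) = α * (2 + β * V x + β * V y) := by ring
    linarith [harith]


lemma sigma_repr (b₁ b₂ : Measure X) [IsFiniteMeasure b₁] [IsFiniteMeasure b₂]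
    {f : X → ℝ} (hfmeas : Measurable f) (hf0 : ∀ z, 0 ≤ f z)
    (hIf1 : Integrable f b₁) (hIf2 : Integrable f b₂) :
    ∃ φ : X → ℝ, Measurable φ ∧ (∀ z, |φ z| ≤ f z) ∧
      ∫ z, f z ∂(tv b₁ b₂) = ∫ z, φ z ∂b₁ - ∫ z, φ z ∂b₂ := by
  obtain ⟨i, hi, hpos, hneg⟩ := jordan_split b₁ b₂
  classical
  set p' := (b₁.toSignedMeasure - b₂.toSignedMeasure).toJordanDecomposition.posPart with hp'
  set q' := (b₁.toSignedMeasure - b₂.toSignedMeasure).toJordanDecomposition.negPart with hq'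
  set φ : X → ℝ := fun z => if z ∈ i then f z else -f z with hφdef
  have hφmeas : Measurable φ := hfmeas.ite hi hfmeas.neg
  have hφb : ∀ z, |φ z| ≤ f z := fun z => by
    by_cases hz : z ∈ i <;> simp [hφdef, hz, abs_of_nonneg (hf0 z), abs_neg]
  refine ⟨φ, hφmeas, hφb, ?_⟩
  have hIφ1 : Integrable φ b₁ := hIf1.mono hφmeas.aestronglyMeasurable
    (ae_of_all _ fun z => by rw [Real.norm_eq_abs, Real.norm_of_nonneg (hf0 z)]; exact hφb z)
  have hIφ2 : Integrable φ b₂ := hIf2.mono hφmeas.aestronglyMeasurable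
    (ae_of_all _ fun z => by rw [Real.norm_eq_abs, Real.norm_of_nonneg (hf0 z)]; exact hφb z)
  have hp'le : p' ≤ b₁ :=
    le_trans (hpos ▸ Measure.le_add_right le_rfl) Measure.restrict_le_self
  have hq'le : q' ≤ b₂ :=
    le_trans (hneg ▸ Measure.le_add_right le_rfl) Measure.restrict_le_self
  have hIfp' : Integrable f p' := hIf1.mono_measure hp'le
  have hIfq' : Integrable f q' := hIf2.mono_measure hq'le
  -- integral of f over positive part
  have hIp : ∫ z, f z ∂p' + ∫ z in i, f z ∂b₂ = ∫ z in i, f z ∂b₁ := by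
    rw [← integral_add_measure hIfp' (hIf2.restrict (s := i)), hpos]
  have hIq : ∫ z, f z ∂q' + ∫ z in iᶜ, f z ∂b₁ = ∫ z in iᶜ, f z ∂b₂ := by
    rw [← integral_add_measure hIfq' (hIf1.restrict (s := iᶜ)), hneg]
  -- expansion of ∫ φ
  have hsplit : ∀ (b : Measure X) [IsFiniteMeasure b], Integrable f b →
      ∫ z, φ z ∂b = ∫ z in i, f z ∂b - ∫ z in iᶜ, f z ∂b := by
    intro b _ hIfb
    have hIφb : Integrable φ b := hIfb.mono hφmeas.aestronglyMeasurable
      (ae_of_all _ fun z => by rw [Real.norm_eq_abs, Real.norm_of_nonneg (hf0 z)]; exact hφb z)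
    have h1 : ∫ z in i, φ z ∂b + ∫ z in iᶜ, φ z ∂b = ∫ z, φ z ∂b :=
      integral_add_compl hi hIφb
    have h2 : ∫ z in i, φ z ∂b = ∫ z in i, f z ∂b :=
      setIntegral_congr_fun hi fun z hz => by simp [hφdef, hz]
    have h3 : ∫ z in iᶜ, φ z ∂b = - ∫ z in iᶜ, f z ∂b := by
      rw [← integral_neg]
      exact setIntegral_congr_fun hi.compl fun z hz => by
        simp only [hφdef, Set.mem_compl_iff] at hz ⊢
        rw [if_neg hz]
    linarith
  have hb₁ := hsplit b₁ hIf1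
  have hb₂ := hsplit b₂ hIf2
  -- total variation splits as p' + q'
  have htv : ∫ z, f z ∂(tv b₁ b₂) = ∫ z, f z ∂p' + ∫ z, f z ∂q' := by
    rw [tv, SignedMeasure.totalVariation, ← hp', ← hq', integral_add_measure hIfp' hIfq']
  rw [htv, hb₁, hb₂]
  linarith

lemma avg_bound {p q : Measure X} [IsFiniteMeasure p] [IsFiniteMeasure q]
    {g W : X → ℝ} (hIg_p : Integrable g p) (hIg_q : Integrable g q)
    (hIW_p : Integrable W p) (hIW_q : Integrable W q)
    {α β : ℝ} (hα : 0 ≤ α)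
    (hm : (q Set.univ).toReal = (p Set.univ).toReal)
    (hkey : ∀ x y, g x - g y ≤ α * (2 + β * W x + β * W y)) :
    ∫ x, g x ∂p - ∫ x, g x ∂q
      ≤ α * (2 * (p Set.univ).toReal + β * ∫ x, W x ∂p + β * ∫ x, W x ∂q) := by
  obtain ⟨m, hmdef⟩ : ∃ m : ℝ, m = (p Set.univ).toReal := ⟨_, rfl⟩
  have hqm : (q Set.univ).toReal = m := by rw [hmdef]; exact hm
  have hm0 : 0 ≤ m := hmdef ▸ ENNReal.toReal_nonneg
  rw [← hmdef]
  rcases eq_or_lt_of_le hm0 with hm0' | hm0'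
  · -- m = 0 : both measures are zero
    have hp0 : p = 0 := by
      refine Measure.measure_univ_eq_zero.mp ?_
      rcases ENNReal.toReal_eq_zero_iff _ |>.mp (hmdef ▸ hm0'.symm : (p Set.univ).toReal = 0)
        with h | h
      · exact h
      · exact absurd h (measure_ne_top p Set.univ)
    have hq0 : q = 0 := by
      refine Measure.measure_univ_eq_zero.mp ?_
      rcases ENNReal.toReal_eq_zero_iff _ |>.mp (hqm.trans hm0'.symm) with h | h
      · exact h
      · exact absurd h (measure_ne_top q Set.univ)
    rw [hp0, hq0]
    simp [← hm0']
  · -- m > 0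
    have hinner : ∀ y : X, ∫ x, (g x - g y) ∂p = ∫ x, g x ∂p - m * g y := fun y => by
      rw [integral_sub hIg_p (integrable_const _), integral_const, smul_eq_mul, measureReal_def, ← hmdef]
    have c0 : ∀ y : X, ∫ x, (α * (2 + β * W y) + α * (β * W x)) ∂p
        = m * (α * (2 + β * W y)) + α * (β * ∫ x, W x ∂p) := fun y => by
      rw [integral_add (integrable_const _) ((hIW_p.const_mul β).const_mul α),
        integral_const, smul_eq_mul, integral_const_mul, integral_const_mul, measureReal_def, ← hmdef]
    have hibound : ∀ y : X, ∫ x, g x ∂p - m * g y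
        ≤ m * (α * (2 + β * W y)) + α * (β * ∫ x, W x ∂p) := fun y => by
      have h1 : ∫ x, (g x - g y) ∂p ≤ ∫ x, (α * (2 + β * W y) + α * (β * W x)) ∂p := by
        refine integral_mono (hIg_p.sub (integrable_const _))
          ((integrable_const _).add ((hIW_p.const_mul β).const_mul α)) fun x => ?_
        have := hkey x y
        simp only
        nlinarith
      rw [hinner y, c0 y] at h1
      exact h1
    have houterL : ∫ y, (∫ x, g x ∂p - m * g y) ∂q
        = m * ∫ x, g x ∂p - m * ∫ y, g y ∂q := by
      rw [integral_sub (integrable_const _) (hIg_q.const_mul m), integral_const, smul_eq_mul,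
        integral_const_mul, measureReal_def, hqm]
    have c1 : ∫ y, (2 + β * W y) ∂q = 2 * m + β * ∫ y, W y ∂q := by
      rw [integral_add (integrable_const _) (hIW_q.const_mul β), integral_const, smul_eq_mul,
        integral_const_mul, measureReal_def, hqm]
      ring
    have hI2W : Integrable (fun y => 2 + β * W y) q :=
      (integrable_const _).add (hIW_q.const_mul β)
    have c2 : ∫ y, (m * (α * (2 + β * W y)) + α * (β * ∫ x, W x ∂p)) ∂q
        = m * (α * (2 * m + β * ∫ y, W y ∂q)) + m * (α * (β * ∫ x, W x ∂p)) := by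
      rw [integral_add ((hI2W.const_mul α).const_mul m)
        (integrable_const _), integral_const_mul, integral_const_mul, c1, integral_const,
        smul_eq_mul, measureReal_def, hqm]
    have houter : ∫ y, (∫ x, g x ∂p - m * g y) ∂q
        ≤ ∫ y, (m * (α * (2 + β * W y)) + α * (β * ∫ x, W x ∂p)) ∂q :=
      integral_mono ((integrable_const _).sub (hIg_q.const_mul m))
        (((hI2W.const_mul α).const_mul m).add (integrable_const _)) fun y => hibound y
    rw [houterL, c2] at houter
    have e1 : m * (α * (2 * m + β * ∫ y, W y ∂q)) + m * (α * (β * ∫ x, W x ∂p))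
        = m * (α * (2 * m + β * ∫ x, W x ∂p + β * ∫ x, W x ∂q)) := by ring
    rw [e1] at houter
    have e2 : m * ∫ x, g x ∂p - m * ∫ y, g y ∂q
        = m * (∫ x, g x ∂p - ∫ x, g x ∂q) := by ring
    rw [e2] at houter
    exact le_of_mul_le_mul_left houter hm0'


section MainHelpers
variable {X : Type*} [MeasurableSpace X]

lemma integrable_f_bind (P : Kernel X X) [IsMarkovKernel P] {V : X → ℝ}
    (hVmeas : Measurable V) (hV0 : ∀ x, 0 ≤ V x) {γ K β : ℝ}
    (hβ : 0 ≤ β) (hγ0 : 0 ≤ γ) (hK : 0 ≤ K)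
    (hdrift : Drift P V γ K) (ρ : Measure X) [IsFiniteMeasure ρ]
    (hIV : Integrable V ρ) : Integrable (fun z => 1 + β * V z) (ρ.bind P) := by
  have hfmeas : Measurable fun z => 1 + β * V z :=
    measurable_const.add (hVmeas.const_mul β)
  have hf0 : ∀ z, 0 ≤ 1 + β * V z := fun z => by nlinarith [hV0 z]
  refine integrable_of_lint' hfmeas hf0 ?_
  rw [Measure.lintegral_bind (Kernel.measurable P).aemeasurable hfmeas.ennreal_ofReal.aemeasurable]
  have hγVK : ∀ w : X, 0 ≤ γ * V w + K := fun w => by nlinarith [hV0 w]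
  calc ∫⁻ x, ∫⁻ z, ENNReal.ofReal (1 + β * V z) ∂(P x) ∂ρ
      ≤ ∫⁻ x, ENNReal.ofReal (1 + β * (γ * V x + K)) ∂ρ :=
        lintegral_mono fun x => lint_f_bound P hVmeas hV0 hβ hdrift x (hγVK x)
    _ = ∫⁻ x, (ENNReal.ofReal (1 + β * K) + ENNReal.ofReal (β * γ) * ENNReal.ofReal (V x)) ∂ρ := by
        refine lintegral_congr fun x => ?_
        rw [show (1:ℝ) + β * (γ * V x + K) = (1 + β * K) + β * γ * V x from by ring,
          ENNReal.ofReal_add (by nlinarith) (mul_nonneg (mul_nonneg hβ hγ0) (hV0 x)),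
          ENNReal.ofReal_mul (mul_nonneg hβ hγ0)]
    _ = ENNReal.ofReal (1 + β * K) * ρ Set.univ
        + ENNReal.ofReal (β * γ) * ∫⁻ x, ENNReal.ofReal (V x) ∂ρ := by
        rw [lintegral_add_left measurable_const, lintegral_const,
          lintegral_const_mul _ hVmeas.ennreal_ofReal]
    _ < ⊤ := by
        refine ENNReal.add_lt_top.mpr ⟨?_, ?_⟩
        · exact ENNReal.mul_lt_top ofReal_lt_top (measure_lt_top ρ _)
        · exact ENNReal.mul_lt_top ofReal_lt_top (lint_of_integrable hV0 hIV)

lemma integrable_act (P : Kernel X X) [IsMarkovKernel P] {V : X → ℝ}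
    (hVmeas : Measurable V) (hV0 : ∀ x, 0 ≤ V x) {γ K β : ℝ}
    (hβ : 0 ≤ β) (hγ0 : 0 ≤ γ) (hK : 0 ≤ K)
    (hdrift : Drift P V γ K) {φ : X → ℝ} (hφ : Measurable φ)
    (hφb : ∀ z, |φ z| ≤ 1 + β * V z) (ρ : Measure X) [IsFiniteMeasure ρ]
    (hIV : Integrable V ρ) : Integrable (fun x => ∫ z, φ z ∂(P x)) ρ := by
  have hfmeas : Measurable fun z => 1 + β * V z :=
    measurable_const.add (hVmeas.const_mul β)
  have hf0 : ∀ z, 0 ≤ 1 + β * V z := fun z => by nlinarith [hV0 z]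
  have hγVK : ∀ w : X, 0 ≤ γ * V w + K := fun w => by nlinarith [hV0 w]
  have hIf : ∀ w : X, Integrable (fun z => 1 + β * V z) (P w) := fun w =>
    integrable_of_lint' hfmeas hf0
      (lt_of_le_of_lt (lint_f_bound P hVmeas hV0 hβ hdrift w (hγVK w)) ofReal_lt_top)
  have hIφ : ∀ w : X, Integrable φ (P w) := fun w =>
    (hIf w).mono hφ.aestronglyMeasurable (ae_of_all _ fun z => by
      rw [Real.norm_eq_abs, Real.norm_of_nonneg (hf0 z)]; exact hφb z)
  have hintf : ∀ w : X, ∫ z, (1 + β * V z) ∂(P w) ≤ 1 + β * (γ * V w + K) := fun w =>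
    integral_f_le hV0 hβ (hγVK w) hfmeas (lint_f_bound P hVmeas hV0 hβ hdrift w (hγVK w))
  have hgsm : StronglyMeasurable fun x => ∫ z, φ z ∂(P x) :=
    StronglyMeasurable.integral_kernel_prod_right (κ := P) (f := fun _ z => φ z)
      ((hφ.comp measurable_snd).stronglyMeasurable)
  have hD : Integrable (fun x => 1 + β * (γ * V x + K)) ρ := by
    have he : (fun x => 1 + β * (γ * V x + K)) = fun x => (1 + β * K) + (β * γ) * V x := by
      funext x; ring
    rw [he]
    exact (integrable_const _).add (hIV.const_mul _)
  refine hD.mono hgsm.aestronglyMeasurable (ae_of_all _ fun x => ?_)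
  rw [Real.norm_eq_abs, Real.norm_of_nonneg (by nlinarith [hγVK x] : (0:ℝ) ≤ 1 + β * (γ * V x + K))]
  calc |∫ z, φ z ∂(P x)| ≤ ∫ z, |φ z| ∂(P x) := by
        simpa [Real.norm_eq_abs] using norm_integral_le_integral_norm (μ := P x) φ
    _ ≤ ∫ z, (1 + β * V z) ∂(P x) := integral_mono (hIφ x).abs (hIf x) hφb
    _ ≤ 1 + β * (γ * V x + K) := hintf x

end MainHelpers

/-- Contraction of the metric `σ_β` by the kernels, uniformly in the
parameter. -/
theorem sigma_beta_contraction
    {X : Type*} [MeasurableSpace X] {k : ℕ} {Θ : Set (EuclideanSpace ℝ (Fin k))}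
    (hΘ : Θ.Nonempty) (P : Θ → Kernel X X) [∀ θ, IsMarkovKernel (P θ)]
    (V : X → ℝ) (hVmeas : Measurable V) (hV0 : ∀ x, 0 ≤ V x)
    (γ K : ℝ) (hγ : γ ∈ Set.Ioo (0:ℝ) 1) (hK : 0 < K)
    (hdrift : ∀ θ, Drift (P θ) V γ K)
    (R : ℝ) (hR : 2 * K / (1 - γ) < R)
    (μbar : Measure X) [IsProbabilityMeasure μbar]
    (αbar : ℝ) (hαbar : αbar ∈ Set.Ioo (0:ℝ) 1)
    (hminor : ∀ θ, ∀ x, V x ≤ R → ∀ A : Set X, MeasurableSet A →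
      ENNReal.ofReal αbar * μbar A ≤ (P θ) x A) :
    ∃ α ∈ Set.Ioo (0:ℝ) 1, ∃ β > (0:ℝ), ∀ θ,
      ∀ (μ₁ μ₂ : Measure X) [IsProbabilityMeasure μ₁] [IsProbabilityMeasure μ₂],
        Integrable V μ₁ → Integrable V μ₂ →
        sigmaB β V (μ₁.bind (P θ)) (μ₂.bind (P θ)) ≤ α * sigmaB β V μ₁ μ₂ := by
  classical
  have hγ0 := hγ.1; have hγ1 := hγ.2
  obtain ⟨β, hβdef⟩ : ∃ β : ℝ, β = αbar / (2 * K) := ⟨_, rfl⟩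
  have hβ : 0 < β := by rw [hβdef]; exact div_pos hαbar.1 (by linarith)
  have hR0 : 0 < R := lt_trans (div_pos (by linarith) (by linarith)) hR
  have hKR : 2 * K < (1 - γ) * R := by
    rw [div_lt_iff₀ (by linarith)] at hR; linarith
  obtain ⟨γ', hγ'def⟩ : ∃ γ' : ℝ, γ' = γ + 2 * K / R := ⟨_, rfl⟩
  have hγ'1 : γ' < 1 := by
    rw [hγ'def]
    have : 2 * K / R < 1 - γ := by rw [div_lt_iff₀ hR0]; linarith
    linarith
  have hden : (0:ℝ) < 2 + β * R := by nlinarith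
  obtain ⟨α, hαdef⟩ : ∃ α : ℝ,
      α = max ((2 + β * γ' * R) / (2 + β * R)) (max (1 - αbar / 2) γ) := ⟨_, rfl⟩
  have hα1 : (2 + β * γ' * R) / (2 + β * R) ≤ α := hαdef ▸ le_max_left _ _
  have hα2 : 1 - αbar / 2 ≤ α := hαdef ▸ le_trans (le_max_left _ _) (le_max_right _ _)
  have hα3 : γ ≤ α := hαdef ▸ le_trans (le_max_right _ _) (le_max_right _ _)
  have hα0 : 0 < α := lt_of_lt_of_le hγ0 hα3
  have hαlt1 : α < 1 := by
    rw [hαdef]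
    apply max_lt
    · rw [div_lt_one hden]
      nlinarith [mul_pos (mul_pos hβ hR0) (sub_pos.mpr hγ'1)]
    · exact max_lt (by linarith [hαbar.1]) hγ1
  refine ⟨α, ⟨hα0, hαlt1⟩, β, hβ, ?_⟩
  intro θ μ₁ μ₂ _ _ hInt1 hInt2
  -- the weight function
  have hfmeas : Measurable fun z => 1 + β * V z :=
    measurable_const.add (hVmeas.const_mul β)
  have hf0 : ∀ z, 0 ≤ 1 + β * V z := fun z => by nlinarith [hV0 z]
  have hα1' : (2 + β * (γ + 2 * K / R) * R) / (2 + β * R) ≤ α := by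
    rw [← hγ'def]; exact hα1
  -- Jordan decomposition of μ₁ - μ₂
  obtain ⟨i, hi, hpos, hneg⟩ := jordan_split μ₁ μ₂
  obtain ⟨p, hpdef⟩ : ∃ p : Measure X,
    p = (μ₁.toSignedMeasure - μ₂.toSignedMeasure).toJordanDecomposition.posPart := ⟨_, rfl⟩
  obtain ⟨q, hqdef⟩ : ∃ q : Measure X,
    q = (μ₁.toSignedMeasure - μ₂.toSignedMeasure).toJordanDecomposition.negPart := ⟨_, rfl⟩
  rw [← hpdef] at hpos
  rw [← hqdef] at hneg
  haveI : IsFiniteMeasure p := by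
    rw [hpdef]; infer_instance
  haveI : IsFiniteMeasure q := by
    rw [hqdef]; infer_instance
  have hple : p ≤ μ₁ :=
    le_trans (hpos ▸ Measure.le_add_right le_rfl) Measure.restrict_le_self
  have hqle : q ≤ μ₂ :=
    le_trans (hneg ▸ Measure.le_add_right le_rfl) Measure.restrict_le_self
  have hIVp : Integrable V p := hInt1.mono_measure hple
  have hIVq : Integrable V q := hInt2.mono_measure hqle
  have F0 : μ₁ + q = μ₂ + p := by
    nth_rewrite 1 [← Measure.restrict_add_restrict_compl (μ := μ₁) hi]
    nth_rewrite 1 [← Measure.restrict_add_restrict_compl (μ := μ₂) hi]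
    rw [← hpos, ← hneg]
    abel
  have hmass : (q Set.univ).toReal = (p Set.univ).toReal := by
    have h1 : μ₁ Set.univ + q Set.univ = μ₂ Set.univ + p Set.univ := by
      rw [← Measure.add_apply, ← Measure.add_apply, F0]
    rw [measure_univ (μ := μ₁), measure_univ (μ := μ₂)] at h1
    exact congrArg ENNReal.toReal ((ENNReal.add_right_inj one_ne_top).mp h1)
  -- bound measures
  have F2 : μ₁.bind (P θ) + q.bind (P θ) = μ₂.bind (P θ) + p.bind (P θ) := by
    have h := congrArg (fun μ : Measure X => μ.bind (P θ)) F0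
    simpa only [bind_add] using h
  -- integrability of f with respect to the various measures
  have hIfb₁ : Integrable (fun z => 1 + β * V z) (μ₁.bind (P θ)) :=
    integrable_f_bind (P θ) hVmeas hV0 hβ.le hγ0.le hK.le (hdrift θ) μ₁ hInt1
  have hIfb₂ : Integrable (fun z => 1 + β * V z) (μ₂.bind (P θ)) :=
    integrable_f_bind (P θ) hVmeas hV0 hβ.le hγ0.le hK.le (hdrift θ) μ₂ hInt2
  have hIfpb : Integrable (fun z => 1 + β * V z) (p.bind (P θ)) :=
    integrable_f_bind (P θ) hVmeas hV0 hβ.le hγ0.le hK.le (hdrift θ) p hIVp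
  have hIfqb : Integrable (fun z => 1 + β * V z) (q.bind (P θ)) :=
    integrable_f_bind (P θ) hVmeas hV0 hβ.le hγ0.le hK.le (hdrift θ) q hIVq
  -- representation of the weighted total variation of the bound measures
  obtain ⟨φ, hφmeas, hφb, hrepr⟩ := sigma_repr (μ₁.bind (P θ)) (μ₂.bind (P θ))
    hfmeas hf0 hIfb₁ hIfb₂
  have hIφ : ∀ (ρ : Measure X), Integrable (fun z => 1 + β * V z) ρ → Integrable φ ρ :=
    fun ρ hf => hf.mono hφmeas.aestronglyMeasurable
      (ae_of_all _ fun z => by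
        rw [Real.norm_eq_abs, Real.norm_of_nonneg (hf0 z)]; exact hφb z)
  -- move from the bound of μ's to the bound of jordan parts
  have hswap : ∫ z, φ z ∂(μ₁.bind (P θ)) - ∫ z, φ z ∂(μ₂.bind (P θ))
      = ∫ z, φ z ∂(p.bind (P θ)) - ∫ z, φ z ∂(q.bind (P θ)) := by
    have h1 := integral_add_measure (hIφ _ hIfb₁) (hIφ _ hIfqb)
    have h2 := integral_add_measure (hIφ _ hIfb₂) (hIφ _ hIfpb)
    rw [F2] at h1
    rw [h2] at h1
    linarith
  -- express integrals over bound measures as integrals of the kernel action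
  have hbindp : ∫ z, φ z ∂(p.bind (P θ)) = ∫ x, ∫ z, φ z ∂(P θ x) ∂p :=
    integral_bind' p (P θ) hφmeas (hIφ _ hIfpb)
  have hbindq : ∫ z, φ z ∂(q.bind (P θ)) = ∫ x, ∫ z, φ z ∂(P θ x) ∂q :=
    integral_bind' q (P θ) hφmeas (hIφ _ hIfqb)
  -- the pointwise contraction estimate
  have hkey : ∀ x y : X, (∫ z, φ z ∂(P θ x)) - (∫ z, φ z ∂(P θ y))
      ≤ α * (2 + β * V x + β * V y) := fun x y =>
    key_pointwise (P θ) hVmeas hV0 hγ hK hR hαbar (hdrift θ) μbar (hminor θ)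
      hβdef hα1' hα2 hα3 hφmeas hφb x y
  have hIg_p : Integrable (fun x => ∫ z, φ z ∂(P θ x)) p :=
    integrable_act (P θ) hVmeas hV0 hβ.le hγ0.le hK.le (hdrift θ) hφmeas hφb p hIVp
  have hIg_q : Integrable (fun x => ∫ z, φ z ∂(P θ x)) q :=
    integrable_act (P θ) hVmeas hV0 hβ.le hγ0.le hK.le (hdrift θ) hφmeas hφb q hIVq
  have havg := avg_bound hIg_p hIg_q hIVp hIVq hα0.le hmass hkey
  -- compute σ_β(μ₁, μ₂)
  have hIfp : Integrable (fun z => 1 + β * V z) p := (integrable_const 1).add (hIVp.const_mul β)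
  have hIfq : Integrable (fun z => 1 + β * V z) q := (integrable_const 1).add (hIVq.const_mul β)
  have hfp : ∫ z, (1 + β * V z) ∂p = (p Set.univ).toReal + β * ∫ z, V z ∂p := by
    rw [integral_add (integrable_const 1) (hIVp.const_mul β), integral_const, smul_eq_mul,
      mul_one, integral_const_mul, measureReal_def]
  have hfq : ∫ z, (1 + β * V z) ∂q = (q Set.univ).toReal + β * ∫ z, V z ∂q := by
    rw [integral_add (integrable_const 1) (hIVq.const_mul β), integral_const, smul_eq_mul,
      mul_one, integral_const_mul, measureReal_def]
  have hsigma2 : sigmaB β V μ₁ μ₂ = ∫ z, (1 + β * V z) ∂p + ∫ z, (1 + β * V z) ∂q := by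
    rw [sigmaB, tv, SignedMeasure.totalVariation, ← hpdef, ← hqdef,
      integral_add_measure hIfp hIfq]
  have hsigma1 : sigmaB β V (μ₁.bind (P θ)) (μ₂.bind (P θ))
      = ∫ z, φ z ∂(μ₁.bind (P θ)) - ∫ z, φ z ∂(μ₂.bind (P θ)) := hrepr
  rw [hsigma1, hsigma2, hswap, hbindp, hbindq]
  calc (∫ x, ∫ z, φ z ∂(P θ x) ∂p) - ∫ x, ∫ z, φ z ∂(P θ x) ∂q
      ≤ α * (2 * (p Set.univ).toReal + β * ∫ x, V x ∂p + β * ∫ x, V x ∂q) := havg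
    _ = α * (((p Set.univ).toReal + β * ∫ z, V z ∂p)
        + ((q Set.univ).toReal + β * ∫ z, V z ∂q)) := by rw [hmass]; ring
    _ = α * (∫ z, (1 + β * V z) ∂p + ∫ z, (1 + β * V z) ∂q) := by rw [hfp, hfq]


end PoissonPaper
end
end

section
/- For every θ ∈ Θ there exists a unique probability measure μ*_θ on X such that ∫ V dμ*_θ < ∞ and P_θ μ*_θ = μ*_θ. -/
open MeasureTheory ProbabilityTheory ENNReal

noncomputable section

namespace PoissonPaper

variable {X : Type*} [MeasurableSpace X]

/-! ### Auxiliary lemmas for the Harris-type existence/uniqueness theorem -/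

section HarrisAux

variable {X : Type*} [MeasurableSpace X]

private lemma meas_bind_add (P : Kernel X X) [IsMarkovKernel P] (τ₁ τ₂ : Measure X) :
    (τ₁ + τ₂).bind P = τ₁.bind P + τ₂.bind P := by
  ext A hA
  rw [Measure.bind_apply hA (Kernel.measurable P).aemeasurable, lintegral_add_measure, Measure.add_apply,
    Measure.bind_apply hA (Kernel.measurable P).aemeasurable, Measure.bind_apply hA (Kernel.measurable P).aemeasurable]

private lemma meas_bind_smul (P : Kernel X X) [IsMarkovKernel P] (c : ℝ≥0∞) (τ : Measure X) :
    (c • τ).bind P = c • τ.bind P := by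
  ext A hA
  rw [Measure.bind_apply hA (Kernel.measurable P).aemeasurable, lintegral_smul_measure, Measure.smul_apply,
    smul_eq_mul, Measure.bind_apply hA (Kernel.measurable P).aemeasurable, smul_eq_mul]

private lemma meas_bind_univ (P : Kernel X X) [IsMarkovKernel P] (τ : Measure X) :
    τ.bind P Set.univ = τ Set.univ := by
  rw [Measure.bind_apply MeasurableSet.univ (Kernel.measurable P).aemeasurable]; simp

private lemma smul_fin (μ : Measure X) [IsFiniteMeasure μ] {c : ℝ≥0∞} (hc : c ≠ ⊤) :
    IsFiniteMeasure (c • μ) :=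
  ⟨by rw [Measure.smul_apply, smul_eq_mul]; exact ENNReal.mul_lt_top hc.lt_top (measure_lt_top μ _)⟩

private lemma meas_cancel {m m' k : Measure X} [IsFiniteMeasure k] (h : m + k = m' + k) :
    m = m' := by
  ext A hA
  have h2 := congrArg (fun μ : Measure X => μ A) h
  simp only [Measure.add_apply] at h2
  rw [add_comm (m A), add_comm (m' A)] at h2
  exact (ENNReal.add_right_inj (measure_ne_top k A)).mp h2

/-- The sub-Markovian "regeneration-removed" operator `τ ↦ τ P - a τ(C) μb`. -/
private def Fop (P : Kernel X X) (μb : Measure X) (C : Set X) (a : ℝ≥0∞)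
    (τ : Measure X) : Measure X :=
  τ.bind P - (a * τ C) • μb

section FopLemmas

variable (P : Kernel X X) [IsMarkovKernel P] (μb : Measure X) [IsProbabilityMeasure μb]
  (C : Set X) (a : ℝ≥0∞)

private lemma Fop_add_cancel (ha : a ≠ ⊤)
    (hsub : ∀ τ : Measure X, (a * τ C) • μb ≤ τ.bind P)
    (τ : Measure X) [IsFiniteMeasure τ] :
    Fop P μb C a τ + (a * τ C) • μb = τ.bind P := by
  haveI := smul_fin μb (ENNReal.mul_ne_top ha (measure_ne_top τ C))
  exact Measure.sub_add_cancel_of_le (hsub τ)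

private lemma Fop_fin (τ : Measure X) [IsFiniteMeasure τ] :
    IsFiniteMeasure (Fop P μb C a τ) := by
  haveI : IsFiniteMeasure (τ.bind P) :=
    ⟨by rw [meas_bind_univ]; exact measure_lt_top τ _⟩
  exact isFiniteMeasure_of_le (τ.bind P) Measure.sub_le

private lemma Fop_univ (ha : a ≠ ⊤)
    (hsub : ∀ τ : Measure X, (a * τ C) • μb ≤ τ.bind P)
    (τ : Measure X) [IsFiniteMeasure τ] :
    Fop P μb C a τ Set.univ + a * τ C = τ Set.univ := by
  have h2 := congrArg (fun m : Measure X => m Set.univ) (Fop_add_cancel P μb C a ha hsub τ)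
  simp only [Measure.add_apply, Measure.smul_apply, smul_eq_mul, measure_univ, mul_one,
    meas_bind_univ] at h2
  exact h2

private lemma Fop_add (ha : a ≠ ⊤)
    (hsub : ∀ τ : Measure X, (a * τ C) • μb ≤ τ.bind P)
    (τ₁ τ₂ : Measure X) [IsFiniteMeasure τ₁] [IsFiniteMeasure τ₂] :
    Fop P μb C a (τ₁ + τ₂) = Fop P μb C a τ₁ + Fop P μb C a τ₂ := by
  haveI := smul_fin μb (ENNReal.mul_ne_top ha (measure_ne_top τ₁ C))
  haveI := smul_fin μb (ENNReal.mul_ne_top ha (measure_ne_top τ₂ C))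
  apply meas_cancel (k := (a * τ₁ C) • μb + (a * τ₂ C) • μb)
  have hsplit : (a * (τ₁ + τ₂) C) • μb = (a * τ₁ C) • μb + (a * τ₂ C) • μb := by
    rw [Measure.add_apply, mul_add, add_smul]
  calc Fop P μb C a (τ₁ + τ₂) + ((a * τ₁ C) • μb + (a * τ₂ C) • μb)
      = Fop P μb C a (τ₁ + τ₂) + (a * (τ₁ + τ₂) C) • μb := by rw [hsplit]
    _ = (τ₁ + τ₂).bind P := Fop_add_cancel P μb C a ha hsub _
    _ = τ₁.bind P + τ₂.bind P := meas_bind_add P τ₁ τ₂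
    _ = (Fop P μb C a τ₁ + (a * τ₁ C) • μb) + (Fop P μb C a τ₂ + (a * τ₂ C) • μb) := by
        rw [Fop_add_cancel P μb C a ha hsub τ₁, Fop_add_cancel P μb C a ha hsub τ₂]
    _ = (Fop P μb C a τ₁ + Fop P μb C a τ₂) + ((a * τ₁ C) • μb + (a * τ₂ C) • μb) := by
        rw [add_add_add_comm]

private lemma Fop_smul (ha : a ≠ ⊤)
    (hsub : ∀ τ : Measure X, (a * τ C) • μb ≤ τ.bind P)
    (c : ℝ≥0∞) (hc : c ≠ ⊤) (τ : Measure X) [IsFiniteMeasure τ] :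
    Fop P μb C a (c • τ) = c • Fop P μb C a τ := by
  haveI : IsFiniteMeasure (c • τ) := smul_fin τ hc
  haveI := smul_fin μb (ENNReal.mul_ne_top ha (measure_ne_top τ C))
  haveI : IsFiniteMeasure (c • ((a * τ C) • μb)) := smul_fin _ hc
  apply meas_cancel (k := c • ((a * τ C) • μb))
  have hsplit : (a * (c • τ) C) • μb = c • ((a * τ C) • μb) := by
    rw [Measure.smul_apply, smul_eq_mul, smul_smul, mul_left_comm]
  calc Fop P μb C a (c • τ) + c • ((a * τ C) • μb)
      = Fop P μb C a (c • τ) + (a * (c • τ) C) • μb := by rw [hsplit]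
    _ = (c • τ).bind P := Fop_add_cancel P μb C a ha hsub _
    _ = c • τ.bind P := meas_bind_smul P c τ
    _ = c • (Fop P μb C a τ + (a * τ C) • μb) := by rw [Fop_add_cancel P μb C a ha hsub τ]
    _ = c • Fop P μb C a τ + c • ((a * τ C) • μb) := smul_add c _ _

private lemma Fop_zero (ha : a ≠ ⊤)
    (hsub : ∀ τ : Measure X, (a * τ C) • μb ≤ τ.bind P) :
    Fop P μb C a 0 = 0 := by
  have h := Fop_add_cancel P μb C a ha hsub 0
  have h2 : (a * (0 : Measure X) C) • μb = 0 := by simp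
  rw [h2, add_zero, Measure.bind_zero_left] at h
  exact h

end FopLemmas

end HarrisAux


set_option maxHeartbeats 1000000 in
open Filter in
private theorem key {X : Type*} [MeasurableSpace X] (P : Kernel X X) [IsMarkovKernel P]
    (V : X → ℝ) (hVmeas : Measurable V) (hV0 : ∀ x, 0 ≤ V x)
    (γ K : ℝ) (hγ0 : 0 < γ) (hγ1 : γ < 1) (hK : 0 < K)
    (hdrift : Drift P V γ K)
    (R : ℝ) (hR : 2 * K / (1 - γ) < R)
    (μb : Measure X) [IsProbabilityMeasure μb]
    (αbar : ℝ) (hα0 : 0 < αbar) (hα1 : αbar < 1)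
    (hminor : ∀ x, V x ≤ R → ∀ A : Set X, MeasurableSet A →
      ENNReal.ofReal αbar * μb A ≤ P x A) :
    ∃! μ : Measure X, IsProbabilityMeasure μ ∧ Integrable V μ ∧ μ.bind P = μ := by
  have h1γ : 0 < 1 - γ := by linarith
  have hR2 : 2 * K < R * (1 - γ) := by rwa [div_lt_iff₀ h1γ] at hR
  have hR0 : 0 < R := lt_trans (by positivity) hR
  have hKR : K + γ * R < R := by nlinarith
  obtain ⟨C, hCdef⟩ : ∃ x : Set X, x = {x | V x ≤ R} := ⟨_, rfl⟩
  have hC : MeasurableSet C := by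
    rw [hCdef]; exact measurableSet_le hVmeas measurable_const
  obtain ⟨a, hadef⟩ : ∃ x : ℝ≥0∞, x = ENNReal.ofReal αbar := ⟨_, rfl⟩
  have ha0 : a ≠ 0 := by rw [hadef]; exact (ENNReal.ofReal_pos.mpr hα0).ne'
  have haT : a ≠ ⊤ := by rw [hadef]; exact ENNReal.ofReal_ne_top
  have hKγR : 0 < K + γ * R := by positivity
  obtain ⟨ε, hεdef⟩ : ∃ x : ℝ, x = αbar / (2 * (K + γ * R)) := ⟨_, rfl⟩
  have hε : 0 < ε := by rw [hεdef]; positivity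
  have hεhalf : ε * (K + γ * R) = αbar / 2 := by
    rw [hεdef]; field_simp
  obtain ⟨lam₂, hlam₂def⟩ : ∃ x : ℝ, x = 1 - αbar / 2 := ⟨_, rfl⟩
  have hlam₂0 : 0 < lam₂ := by rw [hlam₂def]; linarith
  have hlam₂1 : lam₂ < 1 := by rw [hlam₂def]; linarith
  obtain ⟨lam₁, hlam₁def⟩ : ∃ x : ℝ, x = (1 + ε * (K + γ * R)) / (1 + ε * R) := ⟨_, rfl⟩
  have hden : 0 < 1 + ε * R := by positivity
  have hlam₁0 : 0 < lam₁ := by rw [hlam₁def]; positivity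
  have hlam₁1 : lam₁ < 1 := by
    rw [hlam₁def, div_lt_one hden]
    have := mul_lt_mul_of_pos_left hKR hε
    linarith
  obtain ⟨lam, hlamdef⟩ : ∃ x : ℝ, x = max lam₁ lam₂ := ⟨_, rfl⟩
  have hlam1 : lam < 1 := by rw [hlamdef]; exact max_lt hlam₁1 hlam₂1
  obtain ⟨l, hldef⟩ : ∃ x : ℝ≥0∞, x = ENNReal.ofReal lam := ⟨_, rfl⟩
  have hl1 : l < 1 := by rw [hldef]; exact ENNReal.ofReal_lt_one.mpr hlam1
  obtain ⟨w, hwdef⟩ : ∃ x : X → ℝ≥0∞, x = fun x => 1 + ENNReal.ofReal ε * ENNReal.ofReal (V x) := ⟨_, rfl⟩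
  have hwmeas : Measurable w := by
    rw [hwdef]
    exact measurable_const.add (measurable_const.mul (hVmeas.ennreal_ofReal))
  have hw1 : ∀ x, 1 ≤ w x := by
    intro x; simp only [hwdef]; exact le_self_add
  -- `X` is nonempty, hence `C` is nonempty by the drift condition
  have hXne : Nonempty X := by
    by_contra h
    have h0 : μb Set.univ = 0 := by
      rw [Set.univ_eq_empty_iff.mpr (not_nonempty_iff.mp h)]; simp
    rw [measure_univ] at h0; exact one_ne_zero h0
  have hCne : ∃ x, V x ≤ R := by
    by_contra h
    push_neg at h
    have hIb : BddBelow (Set.range V) := ⟨0, by rintro _ ⟨x, rfl⟩; exact hV0 x⟩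
    have hRI : R ≤ ⨅ x, V x := le_ciInf fun x => (h x).le
    have hkey : ∀ δ : ℝ, 0 < δ → (⨅ x, V x) ≤ γ * ((⨅ x, V x) + δ) + K := by
      intro δ hδ
      obtain ⟨x, hx⟩ := exists_lt_of_ciInf_lt (show (⨅ x, V x) < (⨅ x, V x) + δ by linarith)
      have h2 : ENNReal.ofReal (⨅ x, V x) ≤ ∫⁻ y, ENNReal.ofReal (V y) ∂(P x) := by
        calc ENNReal.ofReal (⨅ x, V x) = ∫⁻ _, ENNReal.ofReal (⨅ x, V x) ∂(P x) := by simp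
          _ ≤ _ := lintegral_mono fun y => ENNReal.ofReal_le_ofReal (ciInf_le hIb y)
      have h4 : (⨅ x, V x) ≤ γ * V x + K :=
        (ENNReal.ofReal_le_ofReal_iff (by nlinarith [hV0 x])).mp (h2.trans (hdrift x))
      have h5 := mul_le_mul_of_nonneg_left hx.le hγ0.le
      linarith
    have hle : (⨅ x, V x) ≤ γ * (⨅ x, V x) + K := by
      by_contra hcon
      push_neg at hcon
      have hδ : 0 < ((⨅ x, V x) - γ * (⨅ x, V x) - K) / (2 * γ) :=
        div_pos (by linarith) (by linarith)
      have h6 := hkey _ hδ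
      have hγδ : γ * (((⨅ x, V x) - γ * (⨅ x, V x) - K) / (2 * γ))
          = ((⨅ x, V x) - γ * (⨅ x, V x) - K) / 2 := by
        field_simp
      nlinarith [h6, hγδ]
    have hI2 : (⨅ x, V x) ≤ K / (1 - γ) := by
      rw [le_div_iff₀ h1γ]; nlinarith [hle]
    have hKK : K / (1 - γ) < 2 * K / (1 - γ) := by
      rw [div_lt_div_iff₀ h1γ h1γ]; nlinarith
    linarith [hRI, hI2, hKK, hR]
  obtain ⟨x₀, hx₀⟩ := hCne
  -- the action of the kernel on the weight function
  have hPw : ∀ x, ∫⁻ y, w y ∂(P x) ≤ 1 + ENNReal.ofReal ε * ENNReal.ofReal (γ * V x + K) := by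
    intro x
    have heq : ∫⁻ y, w y ∂(P x)
        = 1 + ENNReal.ofReal ε * ∫⁻ y, ENNReal.ofReal (V y) ∂(P x) := by
      simp only [hwdef]
      rw [lintegral_add_left measurable_const,
        lintegral_const_mul _ (hVmeas.ennreal_ofReal)]
      simp
    rw [heq]
    gcongr
    exact hdrift x
  -- the minorization in integrated form
  have hsub : ∀ τ : Measure X, (a * τ C) • μb ≤ τ.bind P := by
    intro τ
    rw [Measure.le_iff]
    intro A hA
    rw [Measure.smul_apply, smul_eq_mul, Measure.bind_apply hA (Kernel.measurable P).aemeasurable, hadef]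
    calc ENNReal.ofReal αbar * τ C * μb A = ENNReal.ofReal αbar * μb A * τ C := by ring
      _ = ∫⁻ _ in C, ENNReal.ofReal αbar * μb A ∂τ := (setLIntegral_const C _).symm
      _ ≤ ∫⁻ x in C, (P x) A ∂τ :=
          setLIntegral_mono (Kernel.measurable_coe P hA)
            (fun x hx => hminor x (by simpa [hCdef] using hx) A hA)
      _ ≤ ∫⁻ x, (P x) A ∂τ := lintegral_mono' Measure.restrict_le_self le_rfl
  -- `μb` integrates `w`
  have hLμb : ∫⁻ x, w x ∂μb ≠ ⊤ := by
    have h1 : a * ∫⁻ x, w x ∂μb ≤ ∫⁻ x, w x ∂(P x₀) := by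
      rw [← smul_eq_mul, ← lintegral_smul_measure]
      refine lintegral_mono' (Measure.le_iff.mpr fun A hA => ?_) le_rfl
      rw [Measure.smul_apply, smul_eq_mul, hadef]
      exact hminor x₀ hx₀ A hA
    have h2 := h1.trans (hPw x₀)
    have hfin : (1 : ℝ≥0∞) + ENNReal.ofReal ε * ENNReal.ofReal (γ * V x₀ + K) ≠ ⊤ :=
      ENNReal.add_ne_top.mpr ⟨ENNReal.one_ne_top,
        ENNReal.mul_ne_top ENNReal.ofReal_ne_top ENNReal.ofReal_ne_top⟩
    intro hT
    rw [hT, ENNReal.mul_top ha0] at h2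
    exact hfin (top_le_iff.mp h2)
  have huniv_le : ∀ τ : Measure X, τ Set.univ ≤ ∫⁻ x, w x ∂τ := by
    intro τ
    calc τ Set.univ = ∫⁻ _, 1 ∂τ := by simp
      _ ≤ _ := lintegral_mono hw1
  -- the geometric decay of the regeneration-removed iterates
  have hdecay : ∀ τ : Measure X, IsFiniteMeasure τ →
      ∫⁻ x, w x ∂(Fop P μb C a τ) ≤ l * ∫⁻ x, w x ∂τ := by
    intro τ hτ
    haveI := hτ
    have haC : a * τ C ≠ ⊤ := ENNReal.mul_ne_top haT (measure_ne_top τ C)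
    have hLbind : ∫⁻ x, w x ∂(τ.bind P)
        = ∫⁻ x, w x ∂(Fop P μb C a τ) + (a * τ C) * ∫⁻ x, w x ∂μb := by
      rw [← Fop_add_cancel P μb C a haT hsub τ, lintegral_add_measure, lintegral_smul_measure, smul_eq_mul]
    have hb1 : ∫⁻ x in C, (1 + ENNReal.ofReal ε * ENNReal.ofReal (γ * V x + K)) ∂τ
        ≤ (ENNReal.ofReal lam₂ + a) * τ C := by
      have hp : ∀ x ∈ C, (1 + ENNReal.ofReal ε * ENNReal.ofReal (γ * V x + K))
          ≤ ENNReal.ofReal lam₂ + a := by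
        intro x hx
        have hxC : V x ≤ R := by simpa [hCdef] using hx
        have h1 : (1 : ℝ≥0∞) + ENNReal.ofReal ε * ENNReal.ofReal (γ * V x + K)
            ≤ 1 + ENNReal.ofReal ε * ENNReal.ofReal (γ * R + K) := by
          have hmono : γ * V x + K ≤ γ * R + K := by nlinarith
          gcongr
          all_goals exact ENNReal.ofReal_le_ofReal hmono
        refine h1.trans (le_of_eq ?_)
        rw [← ENNReal.ofReal_mul hε.le,
          show γ * R + K = K + γ * R from by ring, hεhalf, hadef,
          show (1 : ℝ≥0∞) = ENNReal.ofReal 1 from ENNReal.ofReal_one.symm,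
          ← ENNReal.ofReal_add (by norm_num) (by positivity),
          ← ENNReal.ofReal_add hlam₂0.le hα0.le]
        congr 1
        rw [hlam₂def]; ring
      calc ∫⁻ x in C, (1 + ENNReal.ofReal ε * ENNReal.ofReal (γ * V x + K)) ∂τ
          ≤ ∫⁻ _ in C, (ENNReal.ofReal lam₂ + a) ∂τ :=
            setLIntegral_mono measurable_const hp
        _ = (ENNReal.ofReal lam₂ + a) * τ C := setLIntegral_const _ _
    have hb2 : ∫⁻ x in Cᶜ, (1 + ENNReal.ofReal ε * ENNReal.ofReal (γ * V x + K)) ∂τ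
        ≤ ENNReal.ofReal lam₁ * ∫⁻ x in Cᶜ, w x ∂τ := by
      rw [← lintegral_const_mul _ hwmeas]
      refine setLIntegral_mono (measurable_const.mul hwmeas) fun x hx => ?_
      have hxR : R ≤ V x := by
        simp only [hCdef, Set.mem_compl_iff, Set.mem_setOf_eq, not_le] at hx
        exact hx.le
      have hg0 : 0 ≤ γ * V x + K := by nlinarith [hV0 x]
      have hL : (1 : ℝ≥0∞) + ENNReal.ofReal ε * ENNReal.ofReal (γ * V x + K)
          = ENNReal.ofReal (1 + ε * (γ * V x + K)) := by
        rw [ENNReal.ofReal_add (by norm_num) (mul_nonneg hε.le hg0), ENNReal.ofReal_one,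
          ENNReal.ofReal_mul hε.le]
      have hw' : w x = ENNReal.ofReal (1 + ε * V x) := by
        simp only [hwdef]
        rw [ENNReal.ofReal_add (by norm_num) (mul_nonneg hε.le (hV0 x)), ENNReal.ofReal_one,
          ENNReal.ofReal_mul hε.le]
      rw [hL, hw', ← ENNReal.ofReal_mul hlam₁0.le]
      apply ENNReal.ofReal_le_ofReal
      have hlam₁γ : γ ≤ lam₁ := by
        rw [hlam₁def, le_div_iff₀ hden]
        nlinarith [mul_nonneg hε.le hK.le]
      have hlam₁R : lam₁ * (1 + ε * R) = 1 + ε * (K + γ * R) := by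
        rw [hlam₁def, div_mul_cancel₀ _ hden.ne']
      nlinarith [hlam₁R,
        mul_le_mul_of_nonneg_right hlam₁γ (mul_nonneg hε.le (sub_nonneg.mpr hxR))]
    have hub : ∫⁻ x, w x ∂(τ.bind P)
        ≤ (ENNReal.ofReal lam₁ * ∫⁻ x in Cᶜ, w x ∂τ + ENNReal.ofReal lam₂ * τ C) + a * τ C := by
      rw [Measure.lintegral_bind (Kernel.measurable P).aemeasurable hwmeas.aemeasurable]
      calc ∫⁻ x, (∫⁻ y, w y ∂(P x)) ∂τ
          ≤ ∫⁻ x, (1 + ENNReal.ofReal ε * ENNReal.ofReal (γ * V x + K)) ∂τ :=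
            lintegral_mono hPw
        _ = (∫⁻ x in C, (1 + ENNReal.ofReal ε * ENNReal.ofReal (γ * V x + K)) ∂τ)
            + ∫⁻ x in Cᶜ, (1 + ENNReal.ofReal ε * ENNReal.ofReal (γ * V x + K)) ∂τ :=
            (lintegral_add_compl _ hC).symm
        _ ≤ (ENNReal.ofReal lam₂ + a) * τ C + ENNReal.ofReal lam₁ * ∫⁻ x in Cᶜ, w x ∂τ :=
            add_le_add hb1 hb2
        _ = (ENNReal.ofReal lam₁ * ∫⁻ x in Cᶜ, w x ∂τ + ENNReal.ofReal lam₂ * τ C) + a * τ C := by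
            ring
    have h1w : (1 : ℝ≥0∞) ≤ ∫⁻ x, w x ∂μb := by
      calc (1 : ℝ≥0∞) = μb Set.univ := measure_univ.symm
        _ ≤ _ := huniv_le μb
    have h3 : ∫⁻ x, w x ∂(Fop P μb C a τ) + a * τ C
        ≤ (ENNReal.ofReal lam₁ * ∫⁻ x in Cᶜ, w x ∂τ + ENNReal.ofReal lam₂ * τ C) + a * τ C := by
      calc ∫⁻ x, w x ∂(Fop P μb C a τ) + a * τ C
          ≤ ∫⁻ x, w x ∂(Fop P μb C a τ) + (a * τ C) * ∫⁻ x, w x ∂μb := by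
            refine add_le_add le_rfl ?_
            calc a * τ C = a * τ C * 1 := (mul_one _).symm
              _ ≤ a * τ C * ∫⁻ x, w x ∂μb := mul_le_mul_right h1w _
        _ = ∫⁻ x, w x ∂(τ.bind P) := hLbind.symm
        _ ≤ _ := hub
    have h4 := (ENNReal.add_le_add_iff_right haC).mp h3
    have hτCw : τ C ≤ ∫⁻ x in C, w x ∂τ := by
      calc τ C = ∫⁻ _ in C, 1 ∂τ := by rw [setLIntegral_const, one_mul]
        _ ≤ _ := lintegral_mono hw1
    calc ∫⁻ x, w x ∂(Fop P μb C a τ)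
        ≤ ENNReal.ofReal lam₁ * ∫⁻ x in Cᶜ, w x ∂τ + ENNReal.ofReal lam₂ * τ C := h4
      _ ≤ l * ∫⁻ x in Cᶜ, w x ∂τ + l * ∫⁻ x in C, w x ∂τ := by
          refine add_le_add ?_ ?_
          · rw [hldef, hlamdef]
            exact mul_le_mul' (ENNReal.ofReal_le_ofReal (le_max_left _ _)) le_rfl
          · rw [hldef, hlamdef]
            exact mul_le_mul' (ENNReal.ofReal_le_ofReal (le_max_right _ _)) hτCw
      _ = l * (∫⁻ x in C, w x ∂τ + ∫⁻ x in Cᶜ, w x ∂τ) := by ring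
      _ = l * ∫⁻ x, w x ∂τ := by rw [lintegral_add_compl _ hC]
  -- iterates of `Fop`
  have hFfin' : ∀ (τ0 : Measure X), IsFiniteMeasure τ0 →
      ∀ n, IsFiniteMeasure ((Fop P μb C a)^[n] τ0) := by
    intro τ0 h0 n
    induction n with
    | zero => simpa using h0
    | succ n ih =>
      rw [Function.iterate_succ_apply']
      haveI := ih
      exact Fop_fin P μb C a _
  have hLiter : ∀ (τ0 : Measure X), IsFiniteMeasure τ0 → ∀ n,
      ∫⁻ x, w x ∂((Fop P μb C a)^[n] τ0) ≤ l ^ n * ∫⁻ x, w x ∂τ0 := by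
    intro τ0 h0 n
    induction n with
    | zero => simp
    | succ n ih =>
      rw [Function.iterate_succ_apply']
      calc ∫⁻ x, w x ∂(Fop P μb C a ((Fop P μb C a)^[n] τ0))
          ≤ l * ∫⁻ x, w x ∂((Fop P μb C a)^[n] τ0) := hdecay _ (hFfin' τ0 h0 n)
        _ ≤ l * (l ^ n * ∫⁻ x, w x ∂τ0) := mul_le_mul' le_rfl ih
        _ = l ^ (n + 1) * ∫⁻ x, w x ∂τ0 := by rw [pow_succ]; ring
  -- the regeneration sequence
  obtain ⟨νn, hνdef⟩ : ∃ x : ℕ → Measure X, x = fun n => (Fop P μb C a)^[n] μb := ⟨_, rfl⟩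
  have hν0 : νn 0 = μb := by simp [hνdef]
  have hνsucc : ∀ n, νn (n + 1) = Fop P μb C a (νn n) := by
    intro n
    simp only [hνdef]
    exact Function.iterate_succ_apply' _ n μb
  have hνfin : ∀ n, IsFiniteMeasure (νn n) := by
    intro n
    simp only [hνdef]
    exact hFfin' μb inferInstance n
  have hLν : ∀ n, ∫⁻ x, w x ∂(νn n) ≤ l ^ n * ∫⁻ x, w x ∂μb := by
    intro n
    simp only [hνdef]
    exact hLiter μb inferInstance n
  have hνuniv : ∀ n, νn n Set.univ ≤ l ^ n * ∫⁻ x, w x ∂μb := fun n =>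
    (huniv_le _).trans (hLν n)
  obtain ⟨ν, hνsumdef⟩ : ∃ x : Measure X, x = Measure.sum νn := ⟨_, rfl⟩
  have hνA : ∀ A : Set X, MeasurableSet A → ν A = ∑' n, νn n A := fun A hA => by
    rw [hνsumdef]; exact Measure.sum_apply νn hA
  have hLνtot : ∫⁻ x, w x ∂ν ≠ ⊤ := by
    have h1 : ∫⁻ x, w x ∂ν ≤ (1 - l)⁻¹ * ∫⁻ x, w x ∂μb := by
      rw [hνsumdef, lintegral_sum_measure]
      calc ∑' n, ∫⁻ x, w x ∂(νn n) ≤ ∑' n, l ^ n * ∫⁻ x, w x ∂μb := ENNReal.tsum_le_tsum hLν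
        _ = (∑' n, l ^ n) * ∫⁻ x, w x ∂μb := ENNReal.tsum_mul_right
        _ = (1 - l)⁻¹ * ∫⁻ x, w x ∂μb := by rw [ENNReal.tsum_geometric]
    have h2 : (1 - l)⁻¹ ≠ ⊤ :=
      ENNReal.inv_ne_top.mpr fun h => hl1.not_ge (tsub_eq_zero_iff_le.mp h)
    intro hT
    rw [hT] at h1
    exact ENNReal.mul_ne_top h2 hLμb (top_le_iff.mp h1)
  have hT1 : (1 : ℝ≥0∞) ≤ ν Set.univ := by
    rw [hνA Set.univ MeasurableSet.univ]
    calc (1 : ℝ≥0∞) = νn 0 Set.univ := by rw [hν0, measure_univ]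
      _ ≤ ∑' n, νn n Set.univ := ENNReal.le_tsum 0
  have hT0 : ν Set.univ ≠ 0 := fun h => by rw [h] at hT1; exact zero_lt_one.not_ge hT1
  have hTfin : ν Set.univ ≠ ⊤ := fun h => hLνtot (top_le_iff.mp (h ▸ huniv_le ν))
  -- telescoping of masses
  have hmass : ∀ n, a * νn n C + νn (n + 1) Set.univ = νn n Set.univ := by
    intro n
    haveI := hνfin n
    have h := Fop_univ P μb C a haT hsub (νn n)
    rw [← hνsucc n] at h
    rw [add_comm]
    exact h
  have hpartial : ∀ N, (∑ n ∈ Finset.range N, a * νn n C) + νn N Set.univ = 1 := by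
    intro N
    induction N with
    | zero => simp [hν0]
    | succ N ih =>
      rw [Finset.sum_range_succ, add_assoc, hmass N]
      exact ih
  have hstot : ∑' n, a * νn n C = 1 := by
    apply le_antisymm
    · rw [ENNReal.tsum_eq_iSup_nat]
      apply iSup_le
      intro N
      calc ∑ n ∈ Finset.range N, a * νn n C
          ≤ (∑ n ∈ Finset.range N, a * νn n C) + νn N Set.univ := le_self_add
        _ = 1 := hpartial N
    · have hseq : ∀ N, (1 : ℝ≥0∞) ≤ (∑' n, a * νn n C) + l ^ N * ∫⁻ x, w x ∂μb := by
        intro N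
        rw [← hpartial N]
        exact add_le_add (ENNReal.sum_le_tsum _) (hνuniv N)
      have hp := ENNReal.Tendsto.mul_const
        (ENNReal.tendsto_pow_atTop_nhds_zero_of_lt_one hl1) (Or.inr hLμb)
      have htend := hp.const_add (∑' n, a * νn n C)
      rw [zero_mul, add_zero] at htend
      exact ge_of_tendsto' htend hseq
  -- invariance of ν
  have hbindν : ν.bind P = ν := by
    ext A hA
    rw [Measure.bind_apply hA (Kernel.measurable P).aemeasurable, hνsumdef, lintegral_sum_measure]
    have h1 : ∀ n, ∫⁻ x, (P x) A ∂(νn n) = νn (n + 1) A + (a * νn n C) * μb A := by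
      intro n
      haveI := hνfin n
      rw [← Measure.bind_apply hA (Kernel.measurable P).aemeasurable,
        ← Fop_add_cancel P μb C a haT hsub (νn n), Measure.add_apply, Measure.smul_apply,
        smul_eq_mul, ← hνsucc n]
    rw [tsum_congr h1, ENNReal.tsum_add, ENNReal.tsum_mul_right, hstot, one_mul,
      Measure.sum_apply νn hA]
    conv_rhs => rw [tsum_eq_zero_add' ENNReal.summable]
    rw [hν0]
    exact add_comm _ _
  -- the candidate invariant probability measure
  refine ⟨(ν Set.univ)⁻¹ • ν, ⟨?_, ?_, ?_⟩, ?_⟩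
  · exact ⟨by rw [Measure.smul_apply, smul_eq_mul, ENNReal.inv_mul_cancel hT0 hTfin]⟩
  · constructor
    · exact hVmeas.aestronglyMeasurable
    · rw [hasFiniteIntegral_iff_ofReal (ae_of_all _ hV0)]
      have hVν : ∫⁻ x, ENNReal.ofReal (V x) ∂ν ≠ ⊤ := by
        intro hT
        apply hLνtot
        have h1 : ENNReal.ofReal ε * ∫⁻ x, ENNReal.ofReal (V x) ∂ν ≤ ∫⁻ x, w x ∂ν := by
          rw [← lintegral_const_mul _ (hVmeas.ennreal_ofReal)]
          refine lintegral_mono fun x => ?_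
          simp only [hwdef]
          exact le_add_self
        rw [hT, ENNReal.mul_top ((ENNReal.ofReal_pos.mpr hε).ne')] at h1
        exact top_le_iff.mp h1
      rw [lintegral_smul_measure]
      exact ENNReal.mul_lt_top (ENNReal.inv_lt_top.mpr (pos_iff_ne_zero.mpr hT0))
        hVν.lt_top
  · rw [meas_bind_smul P _ ν, hbindν]
  -- uniqueness
  · rintro μ ⟨hμprob, hμint, hμinv⟩
    haveI := hμprob
    have hLμ : ∫⁻ x, w x ∂μ ≠ ⊤ := by
      have hV : ∫⁻ x, ENNReal.ofReal (V x) ∂μ ≠ ⊤ := by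
        have h := hμint.2
        rw [hasFiniteIntegral_iff_ofReal (ae_of_all _ hV0)] at h
        exact h.ne
      have heq : ∫⁻ x, w x ∂μ
          = 1 + ENNReal.ofReal ε * ∫⁻ x, ENNReal.ofReal (V x) ∂μ := by
        simp only [hwdef]
        rw [lintegral_add_left measurable_const,
          lintegral_const_mul _ (hVmeas.ennreal_ofReal)]
        simp
      rw [heq]
      exact ENNReal.add_ne_top.mpr ⟨ENNReal.one_ne_top,
        ENNReal.mul_ne_top ENNReal.ofReal_ne_top hV⟩
    obtain ⟨c, hcdef⟩ : ∃ x : ℝ≥0∞, x = a * μ C := ⟨_, rfl⟩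
    have hcT : c ≠ ⊤ := by
      rw [hcdef]; exact ENNReal.mul_ne_top haT (measure_ne_top μ C)
    have hμF : μ = Fop P μb C a μ + c • μb := by
      rw [hcdef, Fop_add_cancel P μb C a haT hsub μ, hμinv]
    have hSfin : ∀ n, IsFiniteMeasure (∑ k ∈ Finset.range n, νn k) := by
      intro n
      induction n with
      | zero =>
        rw [Finset.range_zero, Finset.sum_empty]
        infer_instance
      | succ n ih =>
        rw [Finset.sum_range_succ]
        haveI := ih; haveI := hνfin n
        infer_instance
    have hFS : ∀ n, Fop P μb C a (∑ k ∈ Finset.range n, νn k)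
        = ∑ k ∈ Finset.range n, νn (k + 1) := by
      intro n
      induction n with
      | zero =>
        simp only [Finset.range_zero, Finset.sum_empty]
        exact Fop_zero P μb C a haT hsub
      | succ n ih =>
        rw [Finset.sum_range_succ, Finset.sum_range_succ]
        haveI := hSfin n; haveI := hνfin n
        rw [Fop_add P μb C a haT hsub _ _, ih, hνsucc n]
    have hclaim : ∀ n, μ = (Fop P μb C a)^[n] μ + c • (∑ k ∈ Finset.range n, νn k) := by
      intro n
      induction n with
      | zero => simp
      | succ n ih =>
        haveI := hFfin' μ inferInstance n
        haveI := hSfin n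
        haveI : IsFiniteMeasure (c • (∑ k ∈ Finset.range n, νn k)) := smul_fin _ hcT
        have step : Fop P μb C a μ
            = (Fop P μb C a)^[n + 1] μ + c • (∑ k ∈ Finset.range n, νn (k + 1)) := by
          conv_lhs => rw [ih]
          rw [Fop_add P μb C a haT hsub _ _, Fop_smul P μb C a haT hsub c hcT _, hFS n,
            Function.iterate_succ_apply']
        calc μ = Fop P μb C a μ + c • μb := hμF
          _ = ((Fop P μb C a)^[n + 1] μ + c • (∑ k ∈ Finset.range n, νn (k + 1))) + c • μb := by
              rw [step]
          _ = (Fop P μb C a)^[n + 1] μ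
              + c • ((∑ k ∈ Finset.range n, νn (k + 1)) + μb) := by
              rw [add_assoc, smul_add]
          _ = (Fop P μb C a)^[n + 1] μ + c • (∑ k ∈ Finset.range (n + 1), νn k) := by
              rw [Finset.sum_range_succ' νn n, hν0]
    have happly : ∀ A : Set X, MeasurableSet A → μ A = c * ν A := by
      intro A hA
      have hform : ∀ n, μ A
          = (Fop P μb C a)^[n] μ A + c * ∑ k ∈ Finset.range n, νn k A := by
        intro n
        have h := congrArg (fun m : Measure X => m A) (hclaim n)
        simpa [Measure.add_apply, Measure.smul_apply, smul_eq_mul,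
          Measure.finset_sum_apply] using h
      apply le_antisymm
      · have hub2 : ∀ n, μ A ≤ l ^ n * ∫⁻ x, w x ∂μ + c * ν A := by
          intro n
          rw [hform n]
          refine add_le_add ?_ (mul_le_mul_right ?_ _)
          · calc (Fop P μb C a)^[n] μ A ≤ (Fop P μb C a)^[n] μ Set.univ :=
                measure_mono (Set.subset_univ A)
              _ ≤ ∫⁻ x, w x ∂((Fop P μb C a)^[n] μ) := huniv_le _
              _ ≤ l ^ n * ∫⁻ x, w x ∂μ := hLiter μ inferInstance n
          · rw [hνA A hA]
            exact ENNReal.sum_le_tsum _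
        have hp := ENNReal.Tendsto.mul_const
          (ENNReal.tendsto_pow_atTop_nhds_zero_of_lt_one hl1) (Or.inr hLμ)
        have htend := hp.add_const (c * ν A)
        rw [zero_mul, zero_add] at htend
        exact ge_of_tendsto' htend hub2
      · rw [hνA A hA, ENNReal.tsum_eq_iSup_nat, ENNReal.mul_iSup]
        apply iSup_le
        intro n
        rw [hform n]
        exact le_add_self
    have hμν : μ = c • ν := by
      ext A hA
      rw [happly A hA, Measure.smul_apply, smul_eq_mul]
    have h1T : c * ν Set.univ = 1 := by
      have h := happly Set.univ MeasurableSet.univ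
      rw [measure_univ] at h
      exact h.symm
    have hceq : c = (ν Set.univ)⁻¹ := by
      have h := congrArg (· * (ν Set.univ)⁻¹) h1T
      simpa [mul_assoc, ENNReal.mul_inv_cancel hT0 hTfin] using h
    rw [hμν, hceq]

/-- Existence and uniqueness of the invariant probability measure with
finite `V`-integral, for each parameter. -/
theorem exists_unique_invariant_measure
    {X : Type*} [MeasurableSpace X] {k : ℕ} {Θ : Set (EuclideanSpace ℝ (Fin k))}
    (hΘ : Θ.Nonempty) (P : Θ → Kernel X X) [∀ θ, IsMarkovKernel (P θ)]
    (V : X → ℝ) (hVmeas : Measurable V) (hV0 : ∀ x, 0 ≤ V x)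
    (γ K : ℝ) (hγ : γ ∈ Set.Ioo (0:ℝ) 1) (hK : 0 < K)
    (hdrift : ∀ θ, Drift (P θ) V γ K)
    (R : ℝ) (hR : 2 * K / (1 - γ) < R)
    (μbar : Measure X) [IsProbabilityMeasure μbar]
    (αbar : ℝ) (hαbar : αbar ∈ Set.Ioo (0:ℝ) 1)
    (hminor : ∀ θ, ∀ x, V x ≤ R → ∀ A : Set X, MeasurableSet A →
      ENNReal.ofReal αbar * μbar A ≤ (P θ) x A) :
    ∀ θ, ∃! μ : Measure X,
      IsProbabilityMeasure μ ∧ Integrable V μ ∧ μ.bind (P θ) = μ := by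
  intro θ
  exact key (P θ) V hVmeas hV0 γ K hγ.1 hγ.2 hK (hdrift θ) R hR μbar αbar hαbar.1 hαbar.2
    (hminor θ)

end PoissonPaper
end
end

section
/- Let f : X → ℝ be measurable with |||f|||_β < ∞ and set h = ∫ f dμ*. Then: (i) for every x ∈ X the series u(x) = Σ_{n≥0} ((P^{*n} f)(x) − h) converges absolutely; (ii) u solves the Poisson equation u(x) − (P*u)(x) = f(x) − h for all x; (iii) ∫ u dμ* = 0; (iv) |u(x)| ≤ |||f|||_β · (1/(1 − α)) (2 + βV(x) + βK/(1 − γ)) for all x, so that ‖u‖_β ≤ |||f|||_β · (1/(1 − α))(2 + βK/(1 − γ)); and (v) any two solutions of the Poisson equation with finite seminorm |||·|||_β differ by a constant. -/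
open MeasureTheory ProbabilityTheory ENNReal

noncomputable section

namespace PoissonPaper

variable {X : Type*} [MeasurableSpace X]

section Aux

variable {β : ℝ} {V : X → ℝ}

omit [MeasurableSpace X] in
lemma dBeta_nonneg (hβ : 0 < β) (hV0 : ∀ x, 0 ≤ V x) (x y : X) : 0 ≤ dBeta β V x y := by
  unfold dBeta; split
  · exact le_rfl
  · nlinarith [mul_nonneg hβ.le (hV0 x), mul_nonneg hβ.le (hV0 y)]

omit [MeasurableSpace X] in
lemma dBeta_pos (hβ : 0 < β) (hV0 : ∀ x, 0 ≤ V x) {x y : X} (h : x ≠ y) :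
    0 < dBeta β V x y := by
  unfold dBeta; rw [if_neg h]
  nlinarith [mul_nonneg hβ.le (hV0 x), mul_nonneg hβ.le (hV0 y)]

omit [MeasurableSpace X] in
lemma abs_sub_le_mul_dBeta (hβ : 0 < β) (hV0 : ∀ x, 0 ≤ V x) {φ : X → ℝ} {L : ℝ}
    (hL : 0 ≤ L) (h : osc β V φ ≤ ENNReal.ofReal L) (x y : X) :
    |φ x - φ y| ≤ L * dBeta β V x y := by
  rcases eq_or_ne x y with rfl | hxy
  · simp [dBeta]
  · have hd : 0 < dBeta β V x y := dBeta_pos hβ hV0 hxy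
    have h1 : ENNReal.ofReal (|φ x - φ y| / dBeta β V x y) ≤ ENNReal.ofReal L :=
      le_trans (le_iSup₂ (f := fun x y => ENNReal.ofReal (|φ x - φ y| / dBeta β V x y)) x y) h
    rw [ENNReal.ofReal_le_ofReal_iff hL] at h1
    exact (div_le_iff₀ hd).1 h1

omit [MeasurableSpace X] in
lemma osc_le_ofReal (hβ : 0 < β) (hV0 : ∀ x, 0 ≤ V x) {φ : X → ℝ} {L : ℝ}
    (h : ∀ x y, |φ x - φ y| ≤ L * dBeta β V x y) :
    osc β V φ ≤ ENNReal.ofReal L := by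
  refine iSup₂_le fun x y => ?_
  rcases eq_or_ne x y with rfl | hxy
  · simp [dBeta]
  · have hd := dBeta_pos hβ hV0 hxy
    exact ENNReal.ofReal_le_ofReal ((div_le_iff₀ hd).2 (h x y))

lemma measurable_act (P : Kernel X X) [IsSFiniteKernel P] {φ : X → ℝ} (hφ : Measurable φ) :
    Measurable (act P φ) := by
  have h : StronglyMeasurable (Function.uncurry fun (_ : X) (y : X) => φ y) :=
    (hφ.comp measurable_snd).stronglyMeasurable
  exact (h.integral_kernel_prod_right (κ := P)).measurable

lemma integrable_of_abs_le {ν : Measure X} [IsFiniteMeasure ν] (hV : Integrable V ν)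
    {φ : X → ℝ} {a b : ℝ} (hφ : AEStronglyMeasurable φ ν) (h : ∀ y, |φ y| ≤ a + b * V y) :
    Integrable φ ν :=
  ((integrable_const a).add (hV.const_mul b)).mono' hφ
    (Filter.Eventually.of_forall fun y => by simpa [Real.norm_eq_abs] using h y)

end Aux

/-- Existence, uniqueness (up to constants) and bounds for the solution of
the Poisson equation. -/
theorem poisson_equation_solution
    {X : Type*} [MeasurableSpace X] (V : X → ℝ) (hVmeas : Measurable V)
    (hV0 : ∀ x, 0 ≤ V x) (P : Kernel X X) [IsMarkovKernel P]
    (γ K : ℝ) (hγ : γ ∈ Set.Ioo (0:ℝ) 1) (hK : 0 ≤ K) (hdrift : Drift P V γ K)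
    (α β : ℝ) (hα : α ∈ Set.Ioo γ 1) (hβ : 0 < β)
    (hosc : ∀ φ : X → ℝ, Measurable φ → osc β V φ < ⊤ →
      osc β V (act P φ) ≤ ENNReal.ofReal α * osc β V φ)
    (hsig : ∀ (μ₁ μ₂ : Measure X) [IsProbabilityMeasure μ₁] [IsProbabilityMeasure μ₂],
      Integrable V μ₁ → Integrable V μ₂ →
      sigmaB β V (μ₁.bind P) (μ₂.bind P) ≤ α * sigmaB β V μ₁ μ₂)
    (μst : Measure X) [IsProbabilityMeasure μst] (hμint : Integrable V μst)
    (hμinv : μst.bind P = μst)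
    (f : X → ℝ) (hf : Measurable f) (hffin : osc β V f < ⊤) :
    (∀ x, Summable fun n : ℕ => |(act P)^[n] f x - ∫ y, f y ∂μst|) ∧
    (∀ x, (∑' n : ℕ, ((act P)^[n] f x - ∫ y, f y ∂μst))
        - act P (fun z => ∑' n : ℕ, ((act P)^[n] f z - ∫ y, f y ∂μst)) x
        = f x - ∫ y, f y ∂μst) ∧
    (∫ x, (∑' n : ℕ, ((act P)^[n] f x - ∫ y, f y ∂μst)) ∂μst = 0) ∧
    (∀ x, |∑' n : ℕ, ((act P)^[n] f x - ∫ y, f y ∂μst)| ≤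
      (osc β V f).toReal * ((1 / (1 - α)) * (2 + β * V x + β * (K / (1 - γ))))) ∧
    (wnorm β V (fun x => ∑' n : ℕ, ((act P)^[n] f x - ∫ y, f y ∂μst)) ≤
      ENNReal.ofReal ((1 / (1 - α)) * (2 + β * (K / (1 - γ)))) * osc β V f) ∧
    (∀ u₁ u₂ : X → ℝ, Measurable u₁ → Measurable u₂ →
      osc β V u₁ < ⊤ → osc β V u₂ < ⊤ →
      (∀ x, u₁ x - act P u₁ x = f x - ∫ y, f y ∂μst) →
      (∀ x, u₂ x - act P u₂ x = f x - ∫ y, f y ∂μst) →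
      ∃ c : ℝ, ∀ x, u₂ x = u₁ x + c) := by
  obtain ⟨hγ0, hγ1⟩ := hγ
  obtain ⟨hγα, hα1⟩ := hα
  have hα0 : 0 < α := hγ0.trans hγα
  have hXne : Nonempty X := by
    by_contra hne
    rw [not_nonempty_iff] at hne
    have h1 : μst Set.univ = 1 := measure_univ
    rw [Set.univ_eq_empty_iff.2 hne, measure_empty] at h1
    exact zero_ne_one h1
  obtain ⟨x₀⟩ := hXne
  set h := ∫ y, f y ∂μst with hh
  set C := (osc β V f).toReal with hC
  have hC0 : 0 ≤ C := ENNReal.toReal_nonneg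
  have hoscfC : osc β V f = ENNReal.ofReal C := (ENNReal.ofReal_toReal hffin.ne).symm
  -- integrability of V against the kernel
  have hVPint : ∀ x, Integrable V (P x) := by
    intro x
    refine ⟨hVmeas.aestronglyMeasurable, ?_⟩
    rw [hasFiniteIntegral_iff_ofReal (Filter.Eventually.of_forall hV0)]
    exact lt_of_le_of_lt (hdrift x) ENNReal.ofReal_lt_top
  have hVP : ∀ x, ∫ y, V y ∂(P x) ≤ γ * V x + K := by
    intro x
    have h0 : 0 ≤ γ * V x + K := by nlinarith [hV0 x]
    rw [integral_eq_lintegral_of_nonneg_ae (Filter.Eventually.of_forall hV0)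
      hVmeas.aestronglyMeasurable]
    exact ENNReal.toReal_le_of_le_ofReal h0 (hdrift x)
  -- measurability of iterates
  have hFmeas : ∀ n, Measurable ((act P)^[n] f) := by
    intro n; induction n with
    | zero => simpa using hf
    | succ n ih => rw [Function.iterate_succ_apply']; exact measurable_act P ih
  -- oscillation decay
  have hoscF : ∀ n, osc β V ((act P)^[n] f) ≤ ENNReal.ofReal (α ^ n * C) := by
    intro n; induction n with
    | zero => simpa using hoscfC.le
    | succ n ih =>
      rw [Function.iterate_succ_apply']
      calc osc β V (act P ((act P)^[n] f)) ≤ ENNReal.ofReal α * osc β V ((act P)^[n] f) :=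
            hosc _ (hFmeas n) (lt_of_le_of_lt ih ENNReal.ofReal_lt_top)
        _ ≤ ENNReal.ofReal α * ENNReal.ofReal (α ^ n * C) := by
            exact mul_le_mul_right ih _
        _ = ENNReal.ofReal (α ^ (n + 1) * C) := by
            rw [← ENNReal.ofReal_mul hα0.le]; ring_nf
  have hlip : ∀ n x y, |(act P)^[n] f x - (act P)^[n] f y| ≤ α ^ n * C * dBeta β V x y :=
    fun n => abs_sub_le_mul_dBeta hβ hV0 (mul_nonneg (pow_nonneg hα0.le n) hC0) (hoscF n)
  have hdle : ∀ x y : X, dBeta β V x y ≤ 2 + β * V x + β * V y := by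
    intro x y
    unfold dBeta; split
    · nlinarith [mul_nonneg hβ.le (hV0 x), mul_nonneg hβ.le (hV0 y)]
    · exact le_rfl
  -- linear growth bound for iterates
  have hFabs : ∀ n y, |(act P)^[n] f y| ≤
      (|(act P)^[n] f x₀| + α ^ n * C * (2 + β * V x₀)) + (α ^ n * C * β) * V y := by
    intro n y
    have hq : 0 ≤ α ^ n * C := mul_nonneg (pow_nonneg hα0.le n) hC0
    have h1 : |(act P)^[n] f y| ≤ |(act P)^[n] f x₀| + |(act P)^[n] f y - (act P)^[n] f x₀| := by
      calc |(act P)^[n] f y| = |(act P)^[n] f x₀ + ((act P)^[n] f y - (act P)^[n] f x₀)| := by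
            ring_nf
        _ ≤ _ := abs_add_le _ _
    have h2 : |(act P)^[n] f y - (act P)^[n] f x₀| ≤ α ^ n * C * (2 + β * V y + β * V x₀) :=
      (hlip n y x₀).trans (mul_le_mul_of_nonneg_left (hdle y x₀) hq)
    nlinarith [h1, h2]
  have hFint : ∀ n (ν : Measure X) [IsFiniteMeasure ν], Integrable V ν →
      Integrable ((act P)^[n] f) ν := by
    intro n ν _ hVν
    exact integrable_of_abs_le hVν (hFmeas n).aestronglyMeasurable (hFabs n)
  have hμVtop : ∫⁻ y, ENNReal.ofReal (V y) ∂μst ≠ ⊤ :=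
    ((hasFiniteIntegral_iff_ofReal (Filter.Eventually.of_forall hV0)).1 hμint.2).ne
  -- linear integrands have finite lintegral
  have hlin : ∀ (ν : Measure X), IsProbabilityMeasure ν →
      (∫⁻ y, ENNReal.ofReal (V y) ∂ν) ≠ ⊤ → ∀ c d : ℝ, 0 ≤ c → 0 ≤ d →
      ∫⁻ z, ENNReal.ofReal (c + d * V z) ∂ν ≠ ⊤ := by
    intro ν hprob hνV c d hc hd
    haveI := hprob
    have heq : ∀ z : X, ENNReal.ofReal (c + d * V z)
        = ENNReal.ofReal c + ENNReal.ofReal d * ENNReal.ofReal (V z) := by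
      intro z
      rw [ENNReal.ofReal_add hc (mul_nonneg hd (hV0 z)), ENNReal.ofReal_mul hd]
    simp only [heq]
    rw [lintegral_add_left measurable_const, lintegral_const,
      lintegral_const_mul _ hVmeas.ennreal_ofReal]
    simp only [measure_univ, mul_one]
    exact ENNReal.add_ne_top.2 ⟨ENNReal.ofReal_ne_top,
      ENNReal.mul_ne_top ENNReal.ofReal_ne_top hνV⟩
  -- exchange of integration: invariance of μst in Bochner form
  have bindInt : ∀ (φ : X → ℝ), Measurable φ → ∀ a b : ℝ, 0 ≤ a → 0 ≤ b →
      (∀ y, |φ y| ≤ a + b * V y) →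
      ∫ y, φ y ∂μst = ∫ x, ∫ y, φ y ∂(P x) ∂μst := by
    intro φ hφm a b ha hb hbound
    have hφst : Integrable φ μst := integrable_of_abs_le hμint hφm.aestronglyMeasurable hbound
    have hφbind : Integrable φ (μst.bind ⇑P) := by rw [hμinv]; exact hφst
    have hφPx : ∀ x, Integrable φ (P x) := fun x =>
      integrable_of_abs_le (hVPint x) hφm.aestronglyMeasurable hbound
    have hposm : Measurable fun y => ENNReal.ofReal (φ y) := hφm.ennreal_ofReal
    have hnegm : Measurable fun y => ENNReal.ofReal (-φ y) := hφm.neg.ennreal_ofReal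
    set A : X → ℝ≥0∞ := fun x => ∫⁻ y, ENNReal.ofReal (φ y) ∂(P x) with hA
    set B : X → ℝ≥0∞ := fun x => ∫⁻ y, ENNReal.ofReal (-φ y) ∂(P x) with hB
    have hAm : Measurable A := Measurable.lintegral_kernel_prod_right
      (f := fun _ y => ENNReal.ofReal (φ y)) (hposm.comp measurable_snd)
    have hBm : Measurable B := Measurable.lintegral_kernel_prod_right
      (f := fun _ y => ENNReal.ofReal (-φ y)) (hnegm.comp measurable_snd)
    have hstep : ∀ (g : X → ℝ),
        (∀ y, ENNReal.ofReal (g y) ≤ ENNReal.ofReal (a + b * V y)) → ∀ x,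
        ∫⁻ y, ENNReal.ofReal (g y) ∂(P x) ≤ ENNReal.ofReal ((a + b * K) + (b * γ) * V x) := by
      intro g hg x
      have h1 : ∫⁻ y, ENNReal.ofReal (g y) ∂(P x) ≤ ∫⁻ y, ENNReal.ofReal (a + b * V y) ∂(P x) :=
        lintegral_mono fun y => hg y
      have h2 : ∫⁻ y, ENNReal.ofReal (a + b * V y) ∂(P x)
          = ENNReal.ofReal a + ENNReal.ofReal b * ∫⁻ y, ENNReal.ofReal (V y) ∂(P x) := by
        have heq : ∀ z : X, ENNReal.ofReal (a + b * V z)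
            = ENNReal.ofReal a + ENNReal.ofReal b * ENNReal.ofReal (V z) := fun z => by
          rw [ENNReal.ofReal_add ha (mul_nonneg hb (hV0 z)), ENNReal.ofReal_mul hb]
        simp only [heq]
        rw [lintegral_add_left measurable_const, lintegral_const,
          lintegral_const_mul _ hVmeas.ennreal_ofReal]
        simp [measure_univ]
      have h3 : ENNReal.ofReal b * ∫⁻ y, ENNReal.ofReal (V y) ∂(P x)
          ≤ ENNReal.ofReal b * ENNReal.ofReal (γ * V x + K) := mul_le_mul_right (hdrift x) _
      calc ∫⁻ y, ENNReal.ofReal (g y) ∂(P x)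
          ≤ ∫⁻ y, ENNReal.ofReal (a + b * V y) ∂(P x) := h1
        _ = ENNReal.ofReal a + ENNReal.ofReal b * ∫⁻ y, ENNReal.ofReal (V y) ∂(P x) := h2
        _ ≤ ENNReal.ofReal a + ENNReal.ofReal b * ENNReal.ofReal (γ * V x + K) :=
            add_le_add_right h3 _
        _ = ENNReal.ofReal ((a + b * K) + (b * γ) * V x) := by
            rw [← ENNReal.ofReal_mul hb, ← ENNReal.ofReal_add ha (mul_nonneg hb (by nlinarith [mul_nonneg hγ0.le (hV0 x)]))]
            congr 1; ring
    have hAle : ∀ x, A x ≤ ENNReal.ofReal ((a + b * K) + (b * γ) * V x) :=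
      hstep φ fun y => ENNReal.ofReal_le_ofReal ((le_abs_self _).trans (hbound y))
    have hBle : ∀ x, B x ≤ ENNReal.ofReal ((a + b * K) + (b * γ) * V x) :=
      hstep (fun y => -φ y) fun y => ENNReal.ofReal_le_ofReal ((neg_le_abs _).trans (hbound y))
    have habK : 0 ≤ a + b * K := by nlinarith
    have hbγ : 0 ≤ b * γ := by nlinarith
    have hAfin : ∫⁻ x, A x ∂μst ≠ ⊤ :=
      ne_top_of_le_ne_top (hlin μst inferInstance hμVtop _ _ habK hbγ)
        (lintegral_mono fun x => hAle x)
    have hBfin : ∫⁻ x, B x ∂μst ≠ ⊤ :=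
      ne_top_of_le_ne_top (hlin μst inferInstance hμVtop _ _ habK hbγ)
        (lintegral_mono fun x => hBle x)
    have hAlt : ∀ x, A x < ⊤ := fun x => lt_of_le_of_lt (hAle x) ENNReal.ofReal_lt_top
    have hBlt : ∀ x, B x < ⊤ := fun x => lt_of_le_of_lt (hBle x) ENNReal.ofReal_lt_top
    have hleft : ∫ y, φ y ∂μst = (∫⁻ x, A x ∂μst).toReal - (∫⁻ x, B x ∂μst).toReal := by
      conv_lhs => rw [← hμinv]
      rw [integral_eq_lintegral_pos_part_sub_lintegral_neg_part hφbind,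
        Measure.lintegral_bind (Kernel.measurable P).aemeasurable hposm.aemeasurable,
        Measure.lintegral_bind (Kernel.measurable P).aemeasurable hnegm.aemeasurable]
    have hright : ∀ x, ∫ y, φ y ∂(P x) = (A x).toReal - (B x).toReal := fun x =>
      integral_eq_lintegral_pos_part_sub_lintegral_neg_part (hφPx x)
    rw [hleft]
    simp only [hright]
    rw [integral_sub (integrable_toReal_of_lintegral_ne_top hAm.aemeasurable hAfin)
        (integrable_toReal_of_lintegral_ne_top hBm.aemeasurable hBfin),
      integral_toReal hAm.aemeasurable (Filter.Eventually.of_forall hAlt),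
      integral_toReal hBm.aemeasurable (Filter.Eventually.of_forall hBlt)]

  -- nonnegativity of coefficients in the linear bound of the iterates
  have hFa : ∀ n, 0 ≤ |(act P)^[n] f x₀| + α ^ n * C * (2 + β * V x₀) := by
    intro n
    have hq : 0 ≤ α ^ n * C := mul_nonneg (pow_nonneg hα0.le n) hC0
    nlinarith [abs_nonneg ((act P)^[n] f x₀), mul_nonneg hβ.le (hV0 x₀), mul_nonneg hq (mul_nonneg hβ.le (hV0 x₀))]
  have hFb : ∀ n, 0 ≤ α ^ n * C * β := fun n =>
    mul_nonneg (mul_nonneg (pow_nonneg hα0.le n) hC0) hβ.le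
  -- invariance of the mean of the iterates
  have hmean : ∀ n, ∫ y, (act P)^[n] f y ∂μst = h := by
    intro n; induction n with
    | zero => simp [hh]
    | succ n ih =>
      have hbi := bindInt ((act P)^[n] f) (hFmeas n) _ _ (hFa n) (hFb n) (hFabs n)
      rw [Function.iterate_succ_apply']
      show ∫ x, ∫ y, (act P)^[n] f y ∂(P x) ∂μst = h
      rw [← hbi, ih]
  -- bound on the mean of V
  set Vb := ∫ x, V x ∂μst with hVb
  have hVb0 : 0 ≤ Vb := integral_nonneg hV0
  have hactVint : Integrable (act P V) μst := by
    refine integrable_of_abs_le (a := K) (b := γ) hμint ((measurable_act P hVmeas).aestronglyMeasurable) ?_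
    intro x
    show |∫ y, V y ∂(P x)| ≤ K + γ * V x
    rw [abs_of_nonneg (integral_nonneg hV0)]
    linarith [hVP x]
  have hVble : Vb ≤ K / (1 - γ) := by
    have h1 : Vb = ∫ x, ∫ y, V y ∂(P x) ∂μst :=
      bindInt V hVmeas 0 1 le_rfl zero_le_one (fun y => by rw [abs_of_nonneg (hV0 y)]; linarith)
    have h2 : ∫ x, ∫ y, V y ∂(P x) ∂μst ≤ ∫ x, (γ * V x + K) ∂μst :=
      integral_mono hactVint ((hμint.const_mul γ).add (integrable_const K)) fun x => hVP x
    have h3 : ∫ x, (γ * V x + K) ∂μst = γ * Vb + K := by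
      rw [integral_add (hμint.const_mul γ) (integrable_const K), integral_const_mul,
        integral_const]
      simp [hVb, measure_univ]
    have h4 : Vb ≤ γ * Vb + K := by linarith
    rw [le_div_iff₀ (by linarith : (0:ℝ) < 1 - γ)]
    nlinarith
  -- centered bound
  have hcent : ∀ n x, |(act P)^[n] f x - h| ≤ α ^ n * (C * (2 + β * V x + β * Vb)) := by
    intro n x
    have hq : 0 ≤ α ^ n * C := mul_nonneg (pow_nonneg hα0.le n) hC0
    have hFi : Integrable ((act P)^[n] f) μst := hFint n μst hμint
    have h4 : (act P)^[n] f x - h = ∫ y, ((act P)^[n] f x - (act P)^[n] f y) ∂μst := by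
      rw [integral_sub (integrable_const _) hFi, integral_const, hmean n]
      simp [measure_univ]
    have h5 : ∀ y, |(act P)^[n] f x - (act P)^[n] f y|
        ≤ (α ^ n * C * (2 + β * V x)) + (α ^ n * C * β) * V y := by
      intro y
      have h6 := (hlip n x y).trans (mul_le_mul_of_nonneg_left (hdle x y) hq)
      have e : α ^ n * C * (2 + β * V x + β * V y)
          = (α ^ n * C * (2 + β * V x)) + (α ^ n * C * β) * V y := by ring
      linarith
    have hint1 : Integrable (fun y => |(act P)^[n] f x - (act P)^[n] f y|) μst :=
      ((integrable_const ((act P)^[n] f x)).sub hFi).abs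
    have hint2 : Integrable
        (fun y => (α ^ n * C * (2 + β * V x)) + (α ^ n * C * β) * V y) μst :=
      (integrable_const _).add (hμint.const_mul _)
    calc |(act P)^[n] f x - h| = |∫ y, ((act P)^[n] f x - (act P)^[n] f y) ∂μst| := by rw [h4]
      _ ≤ ∫ y, |(act P)^[n] f x - (act P)^[n] f y| ∂μst := by
          simpa [Real.norm_eq_abs] using
            norm_integral_le_integral_norm (μ := μst)
              (fun y => (act P)^[n] f x - (act P)^[n] f y)
      _ ≤ ∫ y, ((α ^ n * C * (2 + β * V x)) + (α ^ n * C * β) * V y) ∂μst :=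
          integral_mono hint1 hint2 h5
      _ = (α ^ n * C * (2 + β * V x)) + (α ^ n * C * β) * Vb := by
          rw [integral_add (integrable_const _) (hμint.const_mul _), integral_const,
            integral_const_mul]
          simp [hVb, measure_univ]
      _ = α ^ n * (C * (2 + β * V x + β * Vb)) := by ring
  -- summability
  have hsumgeo : ∀ x, Summable fun n : ℕ => α ^ n * (C * (2 + β * V x + β * Vb)) :=
    fun x => (summable_geometric_of_lt_one hα0.le hα1).mul_right _
  have hsum : ∀ x, Summable fun n : ℕ => |(act P)^[n] f x - h| := fun x =>
    Summable.of_nonneg_of_le (fun n => abs_nonneg _) (fun n => hcent n x) (hsumgeo x)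
  have hsummand : ∀ x, Summable fun n : ℕ => (act P)^[n] f x - h := fun x =>
    (hsum x).of_abs
  have h1α : (0:ℝ) < 1 - α := by linarith
  have hKg : 0 ≤ K / (1 - γ) := div_nonneg hK (by linarith)
  -- tsum bound
  have htsum : ∀ x, |∑' n : ℕ, ((act P)^[n] f x - h)|
      ≤ (1 - α)⁻¹ * (C * (2 + β * V x + β * Vb)) := by
    intro x
    calc |∑' n : ℕ, ((act P)^[n] f x - h)| ≤ ∑' n : ℕ, |(act P)^[n] f x - h| := by
          simpa [Real.norm_eq_abs] using
            norm_tsum_le_tsum_norm (f := fun n : ℕ => (act P)^[n] f x - h)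
              (by simpa [Real.norm_eq_abs] using hsum x)
      _ ≤ ∑' n : ℕ, α ^ n * (C * (2 + β * V x + β * Vb)) :=
          Summable.tsum_le_tsum (fun n => hcent n x) (hsum x) (hsumgeo x)
      _ = (1 - α)⁻¹ * (C * (2 + β * V x + β * Vb)) := by
          rw [tsum_mul_right, tsum_geometric_of_lt_one hα0.le hα1, mul_comm]
  have hbound4 : ∀ x, |∑' n : ℕ, ((act P)^[n] f x - h)| ≤
      C * ((1 / (1 - α)) * (2 + β * V x + β * (K / (1 - γ)))) := by
    intro x
    have h6 : β * Vb ≤ β * (K / (1 - γ)) := mul_le_mul_of_nonneg_left hVble hβ.le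
    have h5 : C * (2 + β * V x + β * Vb) ≤ C * (2 + β * V x + β * (K / (1 - γ))) :=
      mul_le_mul_of_nonneg_left (by linarith) hC0
    calc |∑' n : ℕ, ((act P)^[n] f x - h)|
        ≤ (1 - α)⁻¹ * (C * (2 + β * V x + β * Vb)) := htsum x
      _ ≤ (1 - α)⁻¹ * (C * (2 + β * V x + β * (K / (1 - γ)))) :=
          mul_le_mul_of_nonneg_left h5 (by positivity)
      _ = C * ((1 / (1 - α)) * (2 + β * V x + β * (K / (1 - γ)))) := by ring
  -- the wnorm bound
  have goal5 : wnorm β V (fun x => ∑' n : ℕ, ((act P)^[n] f x - h)) ≤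
      ENNReal.ofReal ((1 / (1 - α)) * (2 + β * (K / (1 - γ)))) * osc β V f := by
    rw [hoscfC, ← ENNReal.ofReal_mul (by positivity)]
    refine iSup_le fun x => ?_
    refine ENNReal.ofReal_le_ofReal ?_
    have hbx : 0 ≤ β * V x := mul_nonneg hβ.le (hV0 x)
    have hx1 : (0:ℝ) < 1 + β * V x := by linarith
    rw [div_le_iff₀ hx1]
    have hnn : 0 ≤ (1/(1-α)) * C * (β * V x + (β * (K/(1-γ))) * (β * V x)) :=
      mul_nonneg (mul_nonneg (by positivity) hC0)
        (by nlinarith [mul_nonneg (mul_nonneg hβ.le hKg) hbx])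
    have e : (1 / (1 - α)) * (2 + β * (K / (1 - γ))) * C * (1 + β * V x)
        - C * ((1 / (1 - α)) * (2 + β * V x + β * (K / (1 - γ))))
        = (1/(1-α)) * C * (β * V x + (β * (K/(1-γ))) * (β * V x)) := by ring
    linarith [hbound4 x]
  -- measurability of the centered iterates
  have hgmeas : ∀ n : ℕ, Measurable fun z => (act P)^[n] f z - h :=
    fun n => (hFmeas n).sub measurable_const
  -- the key finiteness bound for exchanging sum and integral
  have hkey : ∀ (ν : Measure X), IsProbabilityMeasure ν →
      (∫⁻ y, ENNReal.ofReal (V y) ∂ν) ≠ ⊤ →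
      (∑' n : ℕ, ∫⁻ z, ‖(act P)^[n] f z - h‖₊ ∂ν) ≠ ⊤ := by
    intro ν hprob hνV
    haveI := hprob
    have hT : (∫⁻ z, ENNReal.ofReal (C * (2 + β * Vb) + (C * β) * V z) ∂ν) ≠ ⊤ :=
      hlin ν hprob hνV _ _
        (by nlinarith [mul_nonneg hβ.le hVb0, mul_nonneg hC0 (mul_nonneg hβ.le hVb0)])
        (mul_nonneg hC0 hβ.le)
    have hmeaslin : Measurable fun z => ENNReal.ofReal (C * (2 + β * Vb) + (C * β) * V z) :=
      (measurable_const.add (hVmeas.const_mul _)).ennreal_ofReal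
    have hbn : ∀ n : ℕ, ∫⁻ z, ‖(act P)^[n] f z - h‖₊ ∂ν ≤
        ENNReal.ofReal α ^ n * ∫⁻ z, ENNReal.ofReal (C * (2 + β * Vb) + (C * β) * V z) ∂ν := by
      intro n
      have h1 : ∀ z, (‖(act P)^[n] f z - h‖₊ : ℝ≥0∞) ≤
          ENNReal.ofReal α ^ n * ENNReal.ofReal (C * (2 + β * Vb) + (C * β) * V z) := by
        intro z
        rw [← ENNReal.ofReal_pow hα0.le, ← ENNReal.ofReal_mul (pow_nonneg hα0.le n)]
        have h2 : |(act P)^[n] f z - h| ≤ α ^ n * (C * (2 + β * Vb) + (C * β) * V z) := by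
          have h7 := hcent n z
          have e : α ^ n * (C * (2 + β * V z + β * Vb))
              = α ^ n * (C * (2 + β * Vb) + (C * β) * V z) := by ring
          linarith
        calc (‖(act P)^[n] f z - h‖₊ : ℝ≥0∞) = ENNReal.ofReal |(act P)^[n] f z - h| := by
              rw [← enorm_eq_nnnorm, Real.enorm_eq_ofReal_abs]
          _ ≤ _ := ENNReal.ofReal_le_ofReal h2
      calc ∫⁻ z, ‖(act P)^[n] f z - h‖₊ ∂ν
          ≤ ∫⁻ z, ENNReal.ofReal α ^ n
              * ENNReal.ofReal (C * (2 + β * Vb) + (C * β) * V z) ∂ν := lintegral_mono h1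
        _ = _ := lintegral_const_mul _ hmeaslin
    have hne : (1 - ENNReal.ofReal α) ≠ 0 := by
      rw [Ne, tsub_eq_zero_iff_le]
      exact fun hle => absurd (lt_of_lt_of_le (ENNReal.ofReal_lt_one.2 hα1) hle) (lt_irrefl _)
    refine ne_top_of_le_ne_top
      (ENNReal.mul_ne_top (ENNReal.inv_ne_top.2 hne) hT) ?_
    calc (∑' n : ℕ, ∫⁻ z, ‖(act P)^[n] f z - h‖₊ ∂ν)
        ≤ ∑' n : ℕ, ENNReal.ofReal α ^ n
            * ∫⁻ z, ENNReal.ofReal (C * (2 + β * Vb) + (C * β) * V z) ∂ν :=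
          ENNReal.tsum_le_tsum hbn
      _ = (∑' n : ℕ, ENNReal.ofReal α ^ n)
            * ∫⁻ z, ENNReal.ofReal (C * (2 + β * Vb) + (C * β) * V z) ∂ν :=
          ENNReal.tsum_mul_right
      _ = (1 - ENNReal.ofReal α)⁻¹
            * ∫⁻ z, ENNReal.ofReal (C * (2 + β * Vb) + (C * β) * V z) ∂ν := by
          rw [ENNReal.tsum_geometric]
  have hPVtop : ∀ x, (∫⁻ y, ENNReal.ofReal (V y) ∂(P x)) ≠ ⊤ := fun x =>
    ne_top_of_le_ne_top ENNReal.ofReal_ne_top (hdrift x)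
  -- the Poisson equation
  have goal2 : ∀ x, (∑' n : ℕ, ((act P)^[n] f x - h))
      - act P (fun z => ∑' n : ℕ, ((act P)^[n] f z - h)) x = f x - h := by
    intro x
    have e1 : act P (fun z => ∑' n : ℕ, ((act P)^[n] f z - h)) x
        = ∑' n : ℕ, ∫ z, ((act P)^[n] f z - h) ∂(P x) :=
      integral_tsum (fun n => (hgmeas n).aestronglyMeasurable)
        (hkey (P x) inferInstance (hPVtop x))
    have e2 : ∀ n : ℕ, ∫ z, ((act P)^[n] f z - h) ∂(P x) = (act P)^[n+1] f x - h := by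
      intro n
      rw [integral_sub (hFint n (P x) (hVPint x)) (integrable_const h), integral_const]
      simp [Function.iterate_succ_apply', act, measure_univ]
    rw [e1]
    simp only [e2]
    have e3 : ∑' n : ℕ, ((act P)^[n] f x - h)
        = ((act P)^[0] f x - h) + ∑' n : ℕ, ((act P)^[n+1] f x - h) :=
      Summable.tsum_eq_zero_add (hsummand x)
    rw [e3]
    simp only [Function.iterate_zero_apply]
    ring
  -- zero mean
  have goal3 : ∫ x, (∑' n : ℕ, ((act P)^[n] f x - h)) ∂μst = 0 := by
    rw [integral_tsum (fun n => (hgmeas n).aestronglyMeasurable)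
      (hkey μst inferInstance hμVtop)]
    have e : ∀ n : ℕ, ∫ z, ((act P)^[n] f z - h) ∂μst = 0 := by
      intro n
      rw [integral_sub (hFint n μst hμint) (integrable_const h), integral_const, hmean n]
      simp [measure_univ]
    simp [e]
  -- uniqueness up to constants
  have goal6 : ∀ u₁ u₂ : X → ℝ, Measurable u₁ → Measurable u₂ →
      osc β V u₁ < ⊤ → osc β V u₂ < ⊤ →
      (∀ x, u₁ x - act P u₁ x = f x - h) → (∀ x, u₂ x - act P u₂ x = f x - h) →
      ∃ c : ℝ, ∀ x, u₂ x = u₁ x + c := by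
    intro u₁ u₂ hm1 hm2 ho1 ho2 he1 he2
    set w : X → ℝ := fun x => u₂ x - u₁ x with hw
    have hwm : Measurable w := hm2.sub hm1
    have hibd : ∀ (u : X → ℝ), osc β V u < ⊤ → ∀ y,
        |u y| ≤ (|u x₀| + (osc β V u).toReal * (2 + β * V x₀))
          + ((osc β V u).toReal * β) * V y := by
      intro u hu y
      have hL0 : (0:ℝ) ≤ (osc β V u).toReal := ENNReal.toReal_nonneg
      have hlipu := abs_sub_le_mul_dBeta hβ hV0 hL0
        (le_of_eq (ENNReal.ofReal_toReal hu.ne).symm)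
      have h1 : |u y| ≤ |u x₀| + |u y - u x₀| := by
        calc |u y| = |u x₀ + (u y - u x₀)| := by ring_nf
          _ ≤ _ := abs_add_le _ _
      have h2 : |u y - u x₀| ≤ (osc β V u).toReal * (2 + β * V y + β * V x₀) :=
        (hlipu y x₀).trans (mul_le_mul_of_nonneg_left (hdle y x₀) hL0)
      nlinarith [h1, h2]
    have hiu : ∀ (u : X → ℝ), Measurable u → osc β V u < ⊤ → ∀ x, Integrable u (P x) :=
      fun u hm hu x => integrable_of_abs_le (hVPint x) hm.aestronglyMeasurable (hibd u hu)
    have hfix : ∀ x, w x = act P w x := by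
      intro x
      have e : act P w x = act P u₂ x - act P u₁ x := by
        show ∫ y, (u₂ y - u₁ y) ∂(P x) = _
        exact integral_sub (hiu u₂ hm2 ho2 x) (hiu u₁ hm1 ho1 x)
      rw [e]
      have e1 := he1 x; have e2 := he2 x
      show u₂ x - u₁ x = _
      linarith
    have hoscw : osc β V w < ⊤ := by
      refine lt_of_le_of_lt
        (osc_le_ofReal hβ hV0 (L := (osc β V u₁).toReal + (osc β V u₂).toReal) ?_)
        ENNReal.ofReal_lt_top
      intro x y
      have l1 := abs_sub_le_mul_dBeta hβ hV0 ENNReal.toReal_nonneg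
        (le_of_eq (ENNReal.ofReal_toReal ho1.ne).symm) x y
      have l2 := abs_sub_le_mul_dBeta hβ hV0 ENNReal.toReal_nonneg
        (le_of_eq (ENNReal.ofReal_toReal ho2.ne).symm) x y
      have l3 : |w x - w y| ≤ |u₂ x - u₂ y| + |u₁ x - u₁ y| := by
        show |(u₂ x - u₁ x) - (u₂ y - u₁ y)| ≤ _
        calc |(u₂ x - u₁ x) - (u₂ y - u₁ y)| = |(u₂ x - u₂ y) + -(u₁ x - u₁ y)| := by ring_nf
          _ ≤ |u₂ x - u₂ y| + |-(u₁ x - u₁ y)| := abs_add_le _ _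
          _ = |u₂ x - u₂ y| + |u₁ x - u₁ y| := by rw [abs_neg]
      have e : ((osc β V u₁).toReal + (osc β V u₂).toReal) * dBeta β V x y
          = (osc β V u₁).toReal * dBeta β V x y + (osc β V u₂).toReal * dBeta β V x y := by
        ring
      linarith
    have hwfix_osc : osc β V w ≤ ENNReal.ofReal α * osc β V w :=
      calc osc β V w = osc β V (act P w) := by
            congr 1; funext z; exact hfix z
        _ ≤ ENNReal.ofReal α * osc β V w := hosc w hwm hoscw
    have hosc0 : osc β V w = 0 := by
      by_contra hne
      have hlt : ENNReal.ofReal α * osc β V w < 1 * osc β V w :=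
        ENNReal.mul_lt_mul_left hne hoscw.ne (ENNReal.ofReal_lt_one.2 hα1)
      rw [one_mul] at hlt
      exact absurd (lt_of_le_of_lt hwfix_osc hlt) (lt_irrefl _)
    have hconst : ∀ x, w x = w x₀ := by
      intro x
      have h0 := abs_sub_le_mul_dBeta hβ hV0 le_rfl
        (le_of_eq (by rw [hosc0]; simp)) x x₀
      rw [zero_mul] at h0
      have h1 : |w x - w x₀| = 0 := le_antisymm h0 (abs_nonneg _)
      have h2 : w x - w x₀ = 0 := abs_eq_zero.1 h1
      linarith
    refine ⟨w x₀, fun x => ?_⟩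
    have h3 : u₂ x - u₁ x = w x₀ := hconst x
    linarith
  exact ⟨hsum, goal2, goal3, hbound4, goal5, goal6⟩

end PoissonPaper
end
end
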